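/- arXiv:2408.12931 — 2 statements merged into one kernel-verified Lean document; each statement's English description precedes it below -/
import Mathlib

section
/- Suppose w_ins(a) = w_del(a) = 1 for all a ∈ Σ and w_sub(a,b) = 1 for all a ≠ b ∈ Σ (with w_sub(a,a) = 0). Then the exp-edit distance dist on ℝ⁺-exponent-strings is a metric: dist(p,p) = 0; dist(p,q) > 0 whenever p ≠ q; dist(p,q) = dist(q,p); and dist(p,r) ≤ dist(p,q) + dist(q,r) for all ℝ⁺-exponent-strings p, q, r. -/
namespace ExpStr

variable {α S : Type*}

/-- Concatenation of exponent-string representations, merging the boundary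
terms when the base characters coincide. -/
def eCat [DecidableEq α] (op : S → S → S) (p q : List (α × S)) : List (α × S) :=
  match p.getLast?, q with
  | some (a, s), (b, t) :: q' =>
      if a = b then p.dropLast ++ (a, op s t) :: q' else p ++ q
  | _, _ => p ++ q

/-- The defining property of an `S`-exponent-string:
consecutive base characters differ. -/
def IsExp (l : List (α × S)) : Prop := l.Chain' (fun x y => x.1 ≠ y.1)

/-- The exponent-string corresponding to a representation. -/
def eRep [DecidableEq α] (op : S → S → S) : List (α × S) → List (α × S)
  | [] => []
  | x :: xs => eCat op [x] (eRep op xs)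

end ExpStr

noncomputable section
namespace ExpStr
open MeasureTheory

variable {α : Type*}

/-- Length of an `ℝ⁺`-exponent-string: the sum of its exponents. -/
def eLen (l : List (α × ℝ)) : ℝ := (l.map Prod.snd).sum

/-- `ℝ⁺`-exponent-strings: consecutive base characters differ and all
exponents are positive reals. -/
def RES (l : List (α × ℝ)) : Prop := IsExp l ∧ ∀ x ∈ l, 0 < x.2

/-- Concatenation of `ℝ⁺`-exponent-strings (exponents added at the boundary). -/
def rcat [DecidableEq α] (p q : List (α × ℝ)) : List (α × ℝ) :=
  eCat (· + ·) p q

/-- The `ℕ`-exponent-string (run-length encoding) corresponding to a word. -/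
def ofWord [DecidableEq α] (w : List α) : List (α × ℝ) :=
  eRep (· + ·) (w.map fun a => (a, (1 : ℝ)))

/-- Multiply every exponent by `k`. -/
def scaleE (k : ℝ) (l : List (α × ℝ)) : List (α × ℝ) :=
  l.map fun x => (x.1, k * x.2)

/-- The base character of the position `x` in an `ℝ⁺`-exponent-string. -/
def charAt [Inhabited α] : List (α × ℝ) → ℝ → α
  | [], _ => default
  | (a, s) :: t, x => if x < s then a else charAt t (x - s)

/-- A single exp-edit operation applied to an infix, with its cost:
insertion `λ → a^q`, deletion `a^q → λ`, or substitution `a^q → b^q`. -/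
def Step [DecidableEq α] (wdel wins : α → ℝ) (wsub : α → α → ℝ)
    (u v : List (α × ℝ)) (c : ℝ) : Prop :=
  ∃ p₁ p₂ : List (α × ℝ), RES p₁ ∧ RES p₂ ∧
    ((∃ a q, 0 < q ∧ u = rcat p₁ p₂ ∧ v = rcat p₁ (rcat [(a, q)] p₂) ∧
        c = q * wins a) ∨
     (∃ a q, 0 < q ∧ u = rcat p₁ (rcat [(a, q)] p₂) ∧ v = rcat p₁ p₂ ∧
        c = q * wdel a) ∨
     (∃ a b q, 0 < q ∧ u = rcat p₁ (rcat [(a, q)] p₂) ∧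
        v = rcat p₁ (rcat [(b, q)] p₂) ∧ c = q * wsub a b))

/-- `EditCost wdel wins wsub u v c` holds iff there is a finite exp-edit
sequence from `u` to `v` of total cost `c`. -/
inductive EditCost [DecidableEq α] (wdel wins : α → ℝ) (wsub : α → α → ℝ)
    (u : List (α × ℝ)) : List (α × ℝ) → ℝ → Prop
  | refl : EditCost wdel wins wsub u u 0
  | step {p q : List (α × ℝ)} {c c' : ℝ} :
      EditCost wdel wins wsub u p c → Step wdel wins wsub p q c' →
      EditCost wdel wins wsub u q (c + c')

/-- Exp-edit distance: the infimum cost of exp-edit sequences. -/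
def eDist [DecidableEq α] (wdel wins : α → ℝ) (wsub : α → α → ℝ)
    (u v : List (α × ℝ)) : ℝ :=
  sInf {c | EditCost wdel wins wsub u v c}

/-- Exp-edit sequences all of whose intermediate terms satisfy `P`. -/
inductive EditCostIn [DecidableEq α] (P : List (α × ℝ) → Prop)
    (wdel wins : α → ℝ) (wsub : α → α → ℝ)
    (u : List (α × ℝ)) : List (α × ℝ) → ℝ → Prop
  | refl : EditCostIn P wdel wins wsub u u 0
  | step {p q : List (α × ℝ)} {c c' : ℝ} :
      EditCostIn P wdel wins wsub u p c → Step wdel wins wsub p q c' → P q →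
      EditCostIn P wdel wins wsub u q (c + c')

/-- All exponents are positive integers. -/
def IntExp (l : List (α × ℝ)) : Prop := ∀ x ∈ l, ∃ n : ℕ, x.2 = n

/-- All exponents are (positive) rationals. -/
def RatExp (l : List (α × ℝ)) : Prop := ∀ x ∈ l, ∃ r : ℚ, x.2 = r

/-- A single classical string edit operation with its cost. -/
def SStep (wdel wins : α → ℝ) (wsub : α → α → ℝ) (u v : List α) (c : ℝ) : Prop :=
  ∃ p₁ p₂ : List α,
    ((∃ a, u = p₁ ++ p₂ ∧ v = p₁ ++ a :: p₂ ∧ c = wins a) ∨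
     (∃ a, u = p₁ ++ a :: p₂ ∧ v = p₁ ++ p₂ ∧ c = wdel a) ∨
     (∃ a b, u = p₁ ++ a :: p₂ ∧ v = p₁ ++ b :: p₂ ∧ c = wsub a b))

/-- Total costs of classical string edit sequences. -/
inductive SEditCost (wdel wins : α → ℝ) (wsub : α → α → ℝ) (u : List α) :
    List α → ℝ → Prop
  | refl : SEditCost wdel wins wsub u u 0
  | step {p q : List α} {c c' : ℝ} :
      SEditCost wdel wins wsub u p c → SStep wdel wins wsub p q c' →
      SEditCost wdel wins wsub u q (c + c')

/-- Classical string edit distance. -/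
def sDist (wdel wins : α → ℝ) (wsub : α → α → ℝ) (u v : List α) : ℝ :=
  sInf {c | SEditCost wdel wins wsub u v c}

/-- X-projection of a diagonal segment `(x₀, y₀, t)`. -/
def mSegX (m : ℝ × ℝ × ℝ) : Set ℝ := Set.Ico m.1 (m.1 + m.2.2)

/-- Y-projection of a diagonal segment `(x₀, y₀, t)`. -/
def mSegY (m : ℝ × ℝ × ℝ) : Set ℝ := Set.Ico m.2.1 (m.2.1 + m.2.2)

/-- X-projection of a matching. -/
def mEX (M : List (ℝ × ℝ × ℝ)) : Set ℝ := ⋃ m ∈ M, mSegX m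

/-- Y-projection of a matching. -/
def mEY (M : List (ℝ × ℝ × ℝ)) : Set ℝ := ⋃ m ∈ M, mSegY m

/-- An exp-matching: a finite family of diagonal segments, each given as
`(x₀, y₀, t)` (start point and length parameter), lying in `[0,L₁)×[0,L₂)`,
with pairwise disjoint axis projections, and monotone. -/
def IsMatching (L₁ L₂ : ℝ) (M : List (ℝ × ℝ × ℝ)) : Prop :=
  (∀ m ∈ M, 0 < m.2.2 ∧ 0 ≤ m.1 ∧ 0 ≤ m.2.1 ∧
      m.1 + m.2.2 ≤ L₁ ∧ m.2.1 + m.2.2 ≤ L₂) ∧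
  M.Pairwise (fun m m' =>
      Disjoint (mSegX m) (mSegX m') ∧ Disjoint (mSegY m) (mSegY m')) ∧
  (∀ m ∈ M, ∀ m' ∈ M, ∀ s s' : ℝ, 0 ≤ s → s < m.2.2 → 0 ≤ s' → s' < m'.2.2 →
      m.1 + s < m'.1 + s' → m.2.1 + s ≤ m'.2.1 + s')

/-- Cost of an exp-matching: deletion and insertion integrals over the
unmatched positions plus the substitution (arc-length) integral over the
segments (the factor `1/√2` cancels the speed `√2` of the parametrization). -/
def mCost [Inhabited α] (wdel wins : α → ℝ) (wsub : α → α → ℝ)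
    (p₁ p₂ : List (α × ℝ)) (M : List (ℝ × ℝ × ℝ)) : ℝ :=
  (∫ x in Set.Ico 0 (eLen p₁) \ mEX M, wdel (charAt p₁ x)) +
  (∫ y in Set.Ico 0 (eLen p₂) \ mEY M, wins (charAt p₂ y)) +
  (M.map fun m => ∫ s in (0 : ℝ)..m.2.2,
      wsub (charAt p₁ (m.1 + s)) (charAt p₂ (m.2.1 + s))).sum

end ExpStr
end

noncomputable section AuxMetric
namespace ExpStr

variable {α : Type*}

/-- Piecewise-linear "hockey-stick" weight. -/
def fm (M x : ℝ) : ℝ := max (M - x) 0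

/-- Discrete weighted functional on exponent-string representations. -/
def phi (ψ : α → ℝ) (M : ℝ) : ℝ → List (α × ℝ) → ℝ
  | _, [] => 0
  | t, (a, s) :: l => ψ a * (fm M t - fm M (t + s)) + phi ψ M (t + s) l

lemma fm_anti {M x y : ℝ} (h : x ≤ y) : fm M y ≤ fm M x := by
  unfold fm; exact max_le_max (by linarith) le_rfl

lemma fm_lip {M x y : ℝ} (h : x ≤ y) : fm M x - fm M y ≤ y - x := by
  unfold fm
  rcases le_total (M - x) 0 with h1 | h1 <;> rcases le_total (M - y) 0 with h2 | h2 <;>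
    simp [max_eq_left, max_eq_right, h1, h2] <;> linarith

/-- `fm M (x+q) - fm M x` is monotone in `x` (for `0 ≤ q`). -/
lemma fm_G_mono {M q x y : ℝ} (hq : 0 ≤ q) (h : x ≤ y) :
    fm M (x + q) - fm M x ≤ fm M (y + q) - fm M y := by
  unfold fm
  rcases max_cases (M - (x + q)) (0:ℝ) with ⟨e1, i1⟩ | ⟨e1, i1⟩ <;>
    rcases max_cases (M - x) (0:ℝ) with ⟨e2, i2⟩ | ⟨e2, i2⟩ <;>
    rcases max_cases (M - (y + q)) (0:ℝ) with ⟨e3, i3⟩ | ⟨e3, i3⟩ <;>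
    rcases max_cases (M - y) (0:ℝ) with ⟨e4, i4⟩ | ⟨e4, i4⟩ <;>
    rw [e1, e2, e3, e4] <;> linarith

lemma eLen_nil : eLen ([] : List (α × ℝ)) = 0 := by simp [eLen]

lemma eLen_cons (a : α) (s : ℝ) (l : List (α × ℝ)) :
    eLen ((a, s) :: l) = s + eLen l := by simp [eLen]

lemma eLen_append (x y : List (α × ℝ)) : eLen (x ++ y) = eLen x + eLen y := by
  simp [eLen]

lemma eLen_nonneg {l : List (α × ℝ)} (h : ∀ x ∈ l, 0 ≤ x.2) : 0 ≤ eLen l := by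
  apply List.sum_nonneg
  intro a ha
  obtain ⟨x, hx, rfl⟩ := List.mem_map.1 ha
  exact h x hx

lemma phi_append (ψ : α → ℝ) (M : ℝ) (y : List (α × ℝ)) :
    ∀ (x : List (α × ℝ)) (t : ℝ),
      phi ψ M t (x ++ y) = phi ψ M t x + phi ψ M (t + eLen x) y := by
  intro x
  induction x with
  | nil => intro t; simp [phi, eLen_nil]
  | cons hd tl ih =>
      intro t
      obtain ⟨a, s⟩ := hd
      simp only [List.cons_append, phi, eLen_cons, List.append_eq]
      rw [ih (t + s), show t + (s + eLen tl) = t + s + eLen tl from by ring]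
      ring

lemma eLen_rcat [DecidableEq α] (x y : List (α × ℝ)) :
    eLen (rcat x y) = eLen x + eLen y := by
  unfold rcat eCat
  rcases hy : y with _ | ⟨⟨b, t'⟩, y'⟩
  · rcases hx : x.getLast? with _ | z <;> simp [eLen_append, eLen_nil]
  · rcases hx : x.getLast? with _ | ⟨a, s⟩
    · simp [eLen_append]
    · obtain ⟨x', rfl⟩ := List.getLast?_eq_some_iff.1 hx
      by_cases hab : a = b
      · dsimp only
        rw [if_pos hab]
        subst hab
        rw [List.dropLast_concat]
        simp only [eLen_append, eLen_cons, eLen_nil]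
        ring
      · dsimp only
        rw [if_neg hab]
        simp only [eLen_append, eLen_cons, eLen_nil]

lemma phi_rcat [DecidableEq α] (ψ : α → ℝ) (M : ℝ) (x y : List (α × ℝ)) (t : ℝ) :
    phi ψ M t (rcat x y) = phi ψ M t x + phi ψ M (t + eLen x) y := by
  unfold rcat eCat
  rcases hy : y with _ | ⟨⟨b, t'⟩, y'⟩
  · rcases hx : x.getLast? with _ | z <;> simp [phi_append, phi]
  · rcases hx : x.getLast? with _ | ⟨a, s⟩
    · have : x = [] := List.getLast?_eq_none_iff.1 hx
      subst this
      simp [phi_append, phi, eLen_nil]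
    · obtain ⟨x', rfl⟩ := List.getLast?_eq_some_iff.1 hx
      by_cases hab : a = b
      · dsimp only
        rw [if_pos hab]
        subst hab
        rw [List.dropLast_concat]
        rw [phi_append, phi_append]
        simp only [phi, eLen_append, eLen_cons, eLen_nil, add_zero]
        rw [show t + eLen x' + s = t + (eLen x' + s) from by ring]
        ring
      · dsimp only
        rw [if_neg hab]
        rw [phi_append]

/-- Shift bound: moving the starting offset right by `q ≥ 0` changes `phi`
by at most `q`, in fact by at most `fm M t - fm M (t+q)`. -/
lemma phi_shift_bound (ψ : α → ℝ) (M : ℝ) (hψ : ∀ a, |ψ a| ≤ 1) {q : ℝ} (hq : 0 ≤ q) :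
    ∀ (l : List (α × ℝ)), (∀ x ∈ l, 0 ≤ x.2) → ∀ t : ℝ,
      |phi ψ M (t + q) l - phi ψ M t l| ≤ fm M t - fm M (t + q) := by
  intro l
  induction l with
  | nil =>
      intro _ t
      simp only [phi, sub_zero, abs_zero]
      linarith [fm_anti (M := M) (show t ≤ t + q by linarith)]
  | cons hd tl ih =>
      intro hnn t
      obtain ⟨a, s⟩ := hd
      have hs : 0 ≤ s := hnn (a, s) (by simp)
      have htl : ∀ x ∈ tl, 0 ≤ x.2 := fun x hx => hnn x (List.mem_cons_of_mem _ hx)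
      simp only [phi]
      have h1 : |phi ψ M (t + s + q) tl - phi ψ M (t + s) tl| ≤
          fm M (t + s) - fm M (t + s + q) := ih htl (t + s)
      have harg : t + q + s = t + s + q := by ring
      rw [harg]
      have hG : fm M (t + q) - fm M t ≤ fm M (t + s + q) - fm M (t + s) :=
        fm_G_mono hq (by linarith)
      have hGle : fm M (t + s + q) - fm M (t + s) ≤ 0 := by
        linarith [fm_anti (M := M) (show t + s ≤ t + s + q by linarith)]
      have hψa := hψ a
      have habs : |ψ a * ((fm M (t + q) - fm M (t + s + q)) - (fm M t - fm M (t + s)))| ≤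
          (fm M (t + s + q) - fm M (t + s)) - (fm M (t + q) - fm M t) := by
        rw [abs_mul]
        have h2 : |(fm M (t + q) - fm M (t + s + q)) - (fm M t - fm M (t + s))| =
            (fm M (t + s + q) - fm M (t + s)) - (fm M (t + q) - fm M t) := by
          rw [abs_of_nonpos (by linarith)]; ring
        calc |ψ a| * |(fm M (t + q) - fm M (t + s + q)) - (fm M t - fm M (t + s))|
            ≤ 1 * |(fm M (t + q) - fm M (t + s + q)) - (fm M t - fm M (t + s))| := by
              apply mul_le_mul_of_nonneg_right hψa (abs_nonneg _)
          _ = _ := by rw [one_mul, h2]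
      calc |ψ a * (fm M (t + q) - fm M (t + s + q)) + phi ψ M (t + s + q) tl -
            (ψ a * (fm M t - fm M (t + s)) + phi ψ M (t + s) tl)|
          = |ψ a * ((fm M (t + q) - fm M (t + s + q)) - (fm M t - fm M (t + s))) +
              (phi ψ M (t + s + q) tl - phi ψ M (t + s) tl)| := by ring_nf
        _ ≤ _ := (abs_add_le _ _)
        _ ≤ ((fm M (t + s + q) - fm M (t + s)) - (fm M (t + q) - fm M t)) +
              (fm M (t + s) - fm M (t + s + q)) := add_le_add habs h1
        _ ≤ fm M t - fm M (t + q) := by linarith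

lemma phi_zero_of_le (ψ : α → ℝ) {M : ℝ} :
    ∀ (l : List (α × ℝ)), (∀ x ∈ l, 0 ≤ x.2) → ∀ t : ℝ, M ≤ t → phi ψ M t l = 0 := by
  intro l
  induction l with
  | nil => intro _ t _; rfl
  | cons hd tl ih =>
      intro hnn t ht
      obtain ⟨a, s⟩ := hd
      have hs : 0 ≤ s := hnn (a, s) (by simp)
      have h1 : fm M t = 0 := by unfold fm; rw [max_eq_right]; linarith
      have h2 : fm M (t + s) = 0 := by unfold fm; rw [max_eq_right]; linarith
      simp only [phi, h1, h2, sub_zero, mul_zero, sub_self, zero_add]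
      exact ih (fun x hx => hnn x (List.mem_cons_of_mem _ hx)) (t + s) (by linarith)

lemma phi_offset (ψ : α → ℝ) :
    ∀ (l : List (α × ℝ)) (M t : ℝ), phi ψ M t l = phi ψ (M - t) 0 l := by
  intro l
  induction l with
  | nil => intro M t; rfl
  | cons hd tl ih =>
      intro M t
      obtain ⟨a, s⟩ := hd
      have hfm : ∀ x : ℝ, fm M (t + x) = fm (M - t) x := by
        intro x; unfold fm; ring_nf
      simp only [phi, zero_add]
      rw [ih M (t + s), ih (M - t) s,
        show M - (t + s) = M - t - s from by ring,
        show fm M t = fm (M - t) 0 from by simpa using hfm 0,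
        hfm s]


section EditLemmas
variable [DecidableEq α]

lemma RES_nil' : RES ([] : List (α × ℝ)) := ⟨List.isChain_nil, by simp⟩

lemma RES_tail {x : α × ℝ} {l : List (α × ℝ)} (h : RES (x :: l)) : RES l :=
  ⟨h.1.tail, fun y hy => h.2 y (List.mem_cons_of_mem _ hy)⟩

lemma rcat_nil_left (q : List (α × ℝ)) : rcat ([] : List (α × ℝ)) q = q := by
  cases q <;> rfl

lemma rcat_single_exp {a : α} {s : ℝ} {t : List (α × ℝ)} (h : IsExp ((a, s) :: t)) :
    rcat [(a, s)] t = (a, s) :: t := by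
  cases t with
  | nil => rfl
  | cons hd t' =>
      obtain ⟨b, t''⟩ := hd
      have hab : a ≠ b := (List.isChain_cons_cons.1 h).1
      simp [rcat, eCat, hab]

lemma step_nonneg {u v : List (α × ℝ)} {c : ℝ}
    (h : Step (fun _ => (1 : ℝ)) (fun _ => (1 : ℝ))
      (fun a b => if a = b then (0 : ℝ) else 1) u v c) : 0 ≤ c := by
  obtain ⟨p₁, p₂, _, _, h | h | h⟩ := h
  · obtain ⟨a, q, hq, _, _, hc⟩ := h
    have hc2 : c = q * 1 := hc
    rw [hc2]; positivity
  · obtain ⟨a, q, hq, _, _, hc⟩ := h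
    have hc2 : c = q * 1 := hc
    rw [hc2]; positivity
  · obtain ⟨a, b, q, hq, _, _, hc⟩ := h
    have hc2 : c = q * (if a = b then (0:ℝ) else 1) := hc
    rw [hc2]
    by_cases hab : a = b <;> simp [hab]
    positivity

lemma editcost_nonneg {u v : List (α × ℝ)} {c : ℝ}
    (h : EditCost (fun _ => (1 : ℝ)) (fun _ => (1 : ℝ))
      (fun a b => if a = b then (0 : ℝ) else 1) u v c) : 0 ≤ c := by
  induction h with
  | refl => exact le_refl 0
  | step h hs ih => have := step_nonneg hs; linarith

lemma editcost_cast {w₁ w₂ : α → ℝ} {ws : α → α → ℝ} {u v : List (α × ℝ)} {c c' : ℝ}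
    (h : EditCost w₁ w₂ ws u v c) (e : c = c') : EditCost w₁ w₂ ws u v c' := e ▸ h

lemma editcost_single {w₁ w₂ : α → ℝ} {ws : α → α → ℝ} {u v : List (α × ℝ)} {c : ℝ}
    (h : Step w₁ w₂ ws u v c) : EditCost w₁ w₂ ws u v c :=
  editcost_cast (EditCost.refl.step h) (zero_add c)

lemma editcost_trans {w₁ w₂ : α → ℝ} {ws : α → α → ℝ} {u v w : List (α × ℝ)} {c c' : ℝ}
    (h1 : EditCost w₁ w₂ ws u v c) (h2 : EditCost w₁ w₂ ws v w c') :
    EditCost w₁ w₂ ws u w (c + c') := by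
  induction h2 with
  | refl => exact editcost_cast h1 (by ring)
  | step h hs ih => exact editcost_cast ((ih).step hs) (by ring)

lemma step_symm {u v : List (α × ℝ)} {c : ℝ}
    (h : Step (fun _ => (1 : ℝ)) (fun _ => (1 : ℝ))
      (fun a b => if a = b then (0 : ℝ) else 1) u v c) :
    Step (fun _ => (1 : ℝ)) (fun _ => (1 : ℝ))
      (fun a b => if a = b then (0 : ℝ) else 1) v u c := by
  obtain ⟨p₁, p₂, h₁, h₂, h | h | h⟩ := h
  · obtain ⟨a, q, hq, hu, hv, hc⟩ := h
    exact ⟨p₁, p₂, h₁, h₂, Or.inr (Or.inl ⟨a, q, hq, hv, hu, hc⟩)⟩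
  · obtain ⟨a, q, hq, hu, hv, hc⟩ := h
    exact ⟨p₁, p₂, h₁, h₂, Or.inl ⟨a, q, hq, hv, hu, hc⟩⟩
  · obtain ⟨a, b, q, hq, hu, hv, hc⟩ := h
    refine ⟨p₁, p₂, h₁, h₂, Or.inr (Or.inr ⟨b, a, q, hq, hv, hu, ?_⟩)⟩
    rw [hc]
    by_cases hab : a = b <;> simp [hab, Ne.symm, eq_comm]

lemma editcost_symm {u v : List (α × ℝ)} {c : ℝ}
    (h : EditCost (fun _ => (1 : ℝ)) (fun _ => (1 : ℝ))
      (fun a b => if a = b then (0 : ℝ) else 1) u v c) :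
    EditCost (fun _ => (1 : ℝ)) (fun _ => (1 : ℝ))
      (fun a b => if a = b then (0 : ℝ) else 1) v u c := by
  induction h with
  | refl => exact EditCost.refl
  | step h hs ih =>
      exact editcost_cast (editcost_trans (editcost_single (step_symm hs)) ih) (by ring)

lemma editcost_to_nil {p : List (α × ℝ)} (hp : RES p) :
    EditCost (fun _ => (1 : ℝ)) (fun _ => (1 : ℝ))
      (fun a b => if a = b then (0 : ℝ) else 1) p [] (eLen p) := by
  induction p with
  | nil => exact editcost_cast EditCost.refl (by simp [eLen])
  | cons hd t ih =>
      obtain ⟨a, s⟩ := hd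
      have hs : 0 < s := hp.2 (a, s) (by simp)
      have hstep : Step (fun _ => (1 : ℝ)) (fun _ => (1 : ℝ))
          (fun a b => if a = b then (0 : ℝ) else 1) ((a, s) :: t) t (s * 1) := by
        refine ⟨[], t, RES_nil', RES_tail hp, Or.inr (Or.inl ⟨a, s, hs, ?_, ?_, rfl⟩)⟩
        · rw [rcat_nil_left, rcat_single_exp hp.1]
        · rw [rcat_nil_left]
      exact editcost_cast (editcost_trans (editcost_single hstep) (ih (RES_tail hp)))
        (by rw [eLen_cons]; ring)

lemma editcost_nonempty {p q : List (α × ℝ)} (hp : RES p) (hq : RES q) :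
    EditCost (fun _ => (1 : ℝ)) (fun _ => (1 : ℝ))
      (fun a b => if a = b then (0 : ℝ) else 1) p q (eLen p + eLen q) :=
  editcost_trans (editcost_to_nil hp) (editcost_symm (editcost_to_nil hq))

lemma editcost_abs_bound (f : List (α × ℝ) → ℝ) (K : ℝ)
    (hstep : ∀ u v c, Step (fun _ => (1 : ℝ)) (fun _ => (1 : ℝ))
      (fun a b => if a = b then (0 : ℝ) else 1) u v c → |f u - f v| ≤ K * c)
    {p v : List (α × ℝ)} {c : ℝ}
    (h : EditCost (fun _ => (1 : ℝ)) (fun _ => (1 : ℝ))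
      (fun a b => if a = b then (0 : ℝ) else 1) p v c) : |f p - f v| ≤ K * c := by
  induction h with
  | refl => simp
  | step h hs ih =>
      calc |f p - f _| ≤ |f p - f _| + |f _ - f _| := abs_sub_le _ _ _
        _ ≤ K * _ + K * _ := add_le_add ih (hstep _ _ _ hs)
        _ = K * (_ + _) := by ring

lemma eLen_single (a : α) (q : ℝ) : eLen [(a, q)] = q := by simp [eLen]

lemma step_len {u v : List (α × ℝ)} {c : ℝ}
    (h : Step (fun _ => (1 : ℝ)) (fun _ => (1 : ℝ))
      (fun a b => if a = b then (0 : ℝ) else 1) u v c) : |eLen u - eLen v| ≤ 1 * c := by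
  obtain ⟨p₁, p₂, h₁, h₂, h | h | h⟩ := h
  · obtain ⟨a, q, hq, hu, hv, hc⟩ := h
    have hc2 : c = q * 1 := hc
    rw [hu, hv, hc2, eLen_rcat, eLen_rcat, eLen_rcat, eLen_single]
    rw [abs_le]; constructor <;> [linarith; linarith]
  · obtain ⟨a, q, hq, hu, hv, hc⟩ := h
    have hc2 : c = q * 1 := hc
    rw [hu, hv, hc2, eLen_rcat, eLen_rcat, eLen_rcat, eLen_single]
    rw [abs_le]; constructor <;> [linarith; linarith]
  · obtain ⟨a, b, q, hq, hu, hv, hc⟩ := h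
    have hc2 : c = q * (if a = b then (0:ℝ) else 1) := hc
    rw [hu, hv, eLen_rcat, eLen_rcat, eLen_rcat, eLen_rcat, eLen_single, eLen_single,
      sub_self, abs_zero, hc2]
    by_cases hab : a = b <;> simp [hab]
    positivity

lemma step_phi (ψ : α → ℝ) (M : ℝ) (hψ : ∀ a, |ψ a| ≤ 1) {u v : List (α × ℝ)} {c : ℝ}
    (h : Step (fun _ => (1 : ℝ)) (fun _ => (1 : ℝ))
      (fun a b => if a = b then (0 : ℝ) else 1) u v c) :
    |phi ψ M 0 u - phi ψ M 0 v| ≤ 2 * c := by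
  obtain ⟨p₁, p₂, h₁, h₂, h | h | h⟩ := h
  · obtain ⟨a, q, hq, hu, hv, hc⟩ := h
    set L := eLen p₁ with hL
    have e1 : phi ψ M 0 u = phi ψ M 0 p₁ + phi ψ M L p₂ := by
      rw [hu, phi_rcat, zero_add]
    have e2 : phi ψ M 0 v = phi ψ M 0 p₁ +
        (ψ a * (fm M L - fm M (L + q)) + phi ψ M (L + q) p₂) := by
      rw [hv, phi_rcat, phi_rcat, zero_add, eLen_single]
      simp [phi]
      rfl
    have hD := phi_shift_bound ψ M hψ hq.le p₂ (fun x hx => (h₂.2 x hx).le) L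
    have hfm1 : 0 ≤ fm M L - fm M (L + q) := by
      linarith [fm_anti (M := M) (show L ≤ L + q by linarith)]
    have hfm2 : fm M L - fm M (L + q) ≤ q := by
      have := fm_lip (M := M) (show L ≤ L + q by linarith); linarith
    have hA : |ψ a * (fm M L - fm M (L + q))| ≤ fm M L - fm M (L + q) := by
      rw [abs_mul, abs_of_nonneg hfm1]
      calc |ψ a| * (fm M L - fm M (L + q)) ≤ 1 * (fm M L - fm M (L + q)) :=
            mul_le_mul_of_nonneg_right (hψ a) hfm1
        _ = _ := one_mul _
    have hc2 : c = q * 1 := hc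
    rw [e1, e2, hc2]
    rw [show phi ψ M 0 p₁ + phi ψ M L p₂ -
        (phi ψ M 0 p₁ + (ψ a * (fm M L - fm M (L + q)) + phi ψ M (L + q) p₂)) =
        (phi ψ M L p₂ - phi ψ M (L + q) p₂) - ψ a * (fm M L - fm M (L + q)) from by ring]
    calc |(phi ψ M L p₂ - phi ψ M (L + q) p₂) - ψ a * (fm M L - fm M (L + q))|
        ≤ |phi ψ M L p₂ - phi ψ M (L + q) p₂| + |ψ a * (fm M L - fm M (L + q))| :=
          abs_sub _ _
      _ ≤ (fm M L - fm M (L + q)) + (fm M L - fm M (L + q)) := by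
          rw [abs_sub_comm]; exact add_le_add hD hA
      _ ≤ 2 * (q * 1) := by linarith
  · obtain ⟨a, q, hq, hu, hv, hc⟩ := h
    set L := eLen p₁ with hL
    have e1 : phi ψ M 0 v = phi ψ M 0 p₁ + phi ψ M L p₂ := by
      rw [hv, phi_rcat, zero_add]
    have e2 : phi ψ M 0 u = phi ψ M 0 p₁ +
        (ψ a * (fm M L - fm M (L + q)) + phi ψ M (L + q) p₂) := by
      rw [hu, phi_rcat, phi_rcat, zero_add, eLen_single]
      simp [phi]
      rfl
    have hD := phi_shift_bound ψ M hψ hq.le p₂ (fun x hx => (h₂.2 x hx).le) L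
    have hfm1 : 0 ≤ fm M L - fm M (L + q) := by
      linarith [fm_anti (M := M) (show L ≤ L + q by linarith)]
    have hfm2 : fm M L - fm M (L + q) ≤ q := by
      have := fm_lip (M := M) (show L ≤ L + q by linarith); linarith
    have hA : |ψ a * (fm M L - fm M (L + q))| ≤ fm M L - fm M (L + q) := by
      rw [abs_mul, abs_of_nonneg hfm1]
      calc |ψ a| * (fm M L - fm M (L + q)) ≤ 1 * (fm M L - fm M (L + q)) :=
            mul_le_mul_of_nonneg_right (hψ a) hfm1
        _ = _ := one_mul _
    have hc2 : c = q * 1 := hc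
    rw [abs_sub_comm, e1, e2, hc2]
    rw [show phi ψ M 0 p₁ + phi ψ M L p₂ -
        (phi ψ M 0 p₁ + (ψ a * (fm M L - fm M (L + q)) + phi ψ M (L + q) p₂)) =
        (phi ψ M L p₂ - phi ψ M (L + q) p₂) - ψ a * (fm M L - fm M (L + q)) from by ring]
    calc |(phi ψ M L p₂ - phi ψ M (L + q) p₂) - ψ a * (fm M L - fm M (L + q))|
        ≤ |phi ψ M L p₂ - phi ψ M (L + q) p₂| + |ψ a * (fm M L - fm M (L + q))| :=
          abs_sub _ _
      _ ≤ (fm M L - fm M (L + q)) + (fm M L - fm M (L + q)) := by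
          rw [abs_sub_comm]; exact add_le_add hD hA
      _ ≤ 2 * (q * 1) := by linarith
  · obtain ⟨a, b, q, hq, hu, hv, hc⟩ := h
    set L := eLen p₁ with hL
    have e1 : phi ψ M 0 u = phi ψ M 0 p₁ +
        (ψ a * (fm M L - fm M (L + q)) + phi ψ M (L + q) p₂) := by
      rw [hu, phi_rcat, phi_rcat, zero_add, eLen_single]
      simp [phi]
      rfl
    have e2 : phi ψ M 0 v = phi ψ M 0 p₁ +
        (ψ b * (fm M L - fm M (L + q)) + phi ψ M (L + q) p₂) := by
      rw [hv, phi_rcat, phi_rcat, zero_add, eLen_single]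
      simp [phi]
      rfl
    have hfm1 : 0 ≤ fm M L - fm M (L + q) := by
      linarith [fm_anti (M := M) (show L ≤ L + q by linarith)]
    have hfm2 : fm M L - fm M (L + q) ≤ q := by
      have := fm_lip (M := M) (show L ≤ L + q by linarith); linarith
    have hc2 : c = q * (if a = b then (0:ℝ) else 1) := hc
    by_cases hab : a = b
    · subst hab
      rw [e1, e2, hc2, sub_self, abs_zero, if_pos rfl]
      norm_num
    · rw [e1, e2, hc2, if_neg hab]
      rw [show phi ψ M 0 p₁ + (ψ a * (fm M L - fm M (L + q)) + phi ψ M (L + q) p₂) -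
          (phi ψ M 0 p₁ + (ψ b * (fm M L - fm M (L + q)) + phi ψ M (L + q) p₂)) =
          (ψ a - ψ b) * (fm M L - fm M (L + q)) from by ring]
      rw [abs_mul, abs_of_nonneg hfm1]
      have hab2 : |ψ a - ψ b| ≤ 2 := by
        calc |ψ a - ψ b| ≤ |ψ a| + |ψ b| := abs_sub _ _
          _ ≤ 1 + 1 := add_le_add (hψ a) (hψ b)
          _ = 2 := by norm_num
      calc |ψ a - ψ b| * (fm M L - fm M (L + q)) ≤ 2 * (fm M L - fm M (L + q)) :=
            mul_le_mul_of_nonneg_right hab2 hfm1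
        _ ≤ 2 * (q * 1) := by linarith
end EditLemmas


section Separation

lemma res_len_pos {q : List (α × ℝ)} (hq : RES q) (hne : q ≠ []) : 0 < eLen q := by
  rcases q with _ | ⟨⟨b, t⟩, q'⟩
  · exact absurd rfl hne
  · have ht : 0 < t := hq.2 (b, t) (by simp)
    have : 0 ≤ eLen q' := eLen_nonneg (fun x hx => (hq.2 x (List.mem_cons_of_mem _ hx)).le)
    rw [eLen_cons]; linarith

lemma hpsi_bound (a b : α) [DecidableEq α] :
    ∀ c, |if c = a then (1 : ℝ) else if c = b then -1 else 0| ≤ 1 := by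
  intro c
  split_ifs <;> norm_num

/-- Separation when the leading characters differ. -/
lemma sep_head_ne [DecidableEq α] {a b : α} (hab : a ≠ b) {s t : ℝ} {p' q' : List (α × ℝ)}
    (hs : 0 < s) (ht : 0 < t)
    (hp' : ∀ x ∈ p', 0 ≤ x.2) (hq' : ∀ x ∈ q', 0 ≤ x.2) :
    ∃ (ψ : α → ℝ) (M : ℝ), (∀ c, |ψ c| ≤ 1) ∧
      phi ψ M 0 ((a, s) :: p') ≠ phi ψ M 0 ((b, t) :: q') := by
  refine ⟨fun c => if c = a then (1 : ℝ) else if c = b then -1 else 0, min s t,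
    hpsi_bound a b, ?_⟩
  have hM : 0 < min s t := lt_min hs ht
  have hfm0 : fm (min s t) 0 = min s t := by
    unfold fm; rw [sub_zero, max_eq_left hM.le]
  have hfms : fm (min s t) s = 0 := by
    unfold fm; rw [max_eq_right]; linarith [min_le_left s t]
  have hfmt : fm (min s t) t = 0 := by
    unfold fm; rw [max_eq_right]; linarith [min_le_right s t]
  have e1 : phi (fun c => if c = a then (1 : ℝ) else if c = b then -1 else 0)
      (min s t) 0 ((a, s) :: p') = min s t := by
    simp only [phi, zero_add]
    rw [phi_zero_of_le _ p' hp' s (min_le_left s t), hfm0, hfms]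
    simp
  have e2 : phi (fun c => if c = a then (1 : ℝ) else if c = b then -1 else 0)
      (min s t) 0 ((b, t) :: q') = -(min s t) := by
    simp only [phi, zero_add]
    rw [phi_zero_of_le _ q' hq' t (min_le_right s t), hfm0, hfmt]
    simp [Ne.symm hab]
  rw [e1, e2]
  intro h
  linarith

/-- Separation when the leading characters agree but the first exponent of `p`
is smaller. -/
lemma sep_head_lt [DecidableEq α] {a a' : α} (haa : a' ≠ a) {s t s' : ℝ}
    {p'' q' : List (α × ℝ)} (hs : 0 < s) (hst : s < t) (hs' : 0 < s')
    (hp'' : ∀ x ∈ p'', 0 ≤ x.2) (hq' : ∀ x ∈ q', 0 ≤ x.2) :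
    ∃ (ψ : α → ℝ) (M : ℝ), (∀ c, |ψ c| ≤ 1) ∧
      phi ψ M 0 ((a, s) :: (a', s') :: p'') ≠ phi ψ M 0 ((a, t) :: q') := by
  set m := min s' (t - s) with hm
  have hm0 : 0 < m := lt_min hs' (by linarith)
  have hms' : m ≤ s' := min_le_left _ _
  have hmts : m ≤ t - s := min_le_right _ _
  refine ⟨fun c => if c = a' then (1 : ℝ) else if c = a then -1 else 0, s + m,
    hpsi_bound a' a, ?_⟩
  have hfm0 : fm (s + m) 0 = s + m := by
    unfold fm; rw [sub_zero, max_eq_left]; linarith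
  have hfms : fm (s + m) s = m := by
    unfold fm; rw [show s + m - s = m from by ring, max_eq_left hm0.le]
  have hfmss : fm (s + m) (s + s') = 0 := by
    unfold fm; rw [max_eq_right]; linarith
  have hfmt : fm (s + m) t = 0 := by
    unfold fm; rw [max_eq_right]; linarith
  have e1 : phi (fun c => if c = a' then (1 : ℝ) else if c = a then -1 else 0)
      (s + m) 0 ((a, s) :: (a', s') :: p'') = m - s := by
    simp only [phi, zero_add]
    rw [phi_zero_of_le _ p'' hp'' (s + s') (by linarith), hfm0, hfms, hfmss]
    simp [Ne.symm haa]
    ring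
  have e2 : phi (fun c => if c = a' then (1 : ℝ) else if c = a then -1 else 0)
      (s + m) 0 ((a, t) :: q') = -(s + m) := by
    simp only [phi, zero_add]
    rw [phi_zero_of_le _ q' hq' t (by linarith), hfm0, hfmt]
    simp [Ne.symm haa]
  rw [e1, e2]
  intro h
  linarith

/-- Two distinct `ℝ⁺`-exponent-strings of the same length are separated by
some functional `phi ψ M 0`. -/
lemma sep [DecidableEq α] :
    ∀ p q : List (α × ℝ), RES p → RES q → eLen p = eLen q → p ≠ q →
      ∃ (ψ : α → ℝ) (M : ℝ), (∀ c, |ψ c| ≤ 1) ∧ phi ψ M 0 p ≠ phi ψ M 0 q := by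
  intro p
  induction p with
  | nil =>
      intro q hp hq hlen hne
      exfalso
      rcases q with _ | ⟨⟨b, t⟩, q'⟩
      · exact hne rfl
      · have := res_len_pos hq (by simp)
        rw [← hlen, eLen_nil] at this
        linarith
  | cons hd p' ih =>
      intro q hp hq hlen hne
      obtain ⟨a, s⟩ := hd
      have hs : 0 < s := hp.2 (a, s) (by simp)
      have hp'nn : ∀ x ∈ p', 0 ≤ x.2 :=
        fun x hx => (hp.2 x (List.mem_cons_of_mem _ hx)).le
      rcases q with _ | ⟨⟨b, t⟩, q'⟩
      · exfalso
        have := res_len_pos hp (by simp)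
        rw [hlen, eLen_nil] at this
        linarith
      · have ht : 0 < t := hq.2 (b, t) (by simp)
        have hq'nn : ∀ x ∈ q', 0 ≤ x.2 :=
          fun x hx => (hq.2 x (List.mem_cons_of_mem _ hx)).le
        by_cases hab : a = b
        · subst hab
          rcases lt_trichotomy s t with hst | hst | hst
          · -- s < t : p' is nonempty
            have hlen' : s + eLen p' = t + eLen q' := by
              rw [eLen_cons, eLen_cons] at hlen; linarith
            have hp'pos : 0 < eLen p' := by
              have := eLen_nonneg hq'nn; linarith
            rcases p' with _ | ⟨⟨a', s'⟩, p''⟩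
            · rw [eLen_nil] at hp'pos; linarith
            · have haa : a' ≠ a := ((List.isChain_cons_cons.1 hp.1).1).symm
              have hs' : 0 < s' := hp.2 (a', s') (by simp)
              exact sep_head_lt haa hs hst hs'
                (fun x hx => hp'nn x (List.mem_cons_of_mem _ hx)) hq'nn
          · -- s = t : recurse
            subst hst
            have hne' : p' ≠ q' := by
              intro h; exact hne (by rw [h])
            have hlen' : eLen p' = eLen q' := by
              rw [eLen_cons, eLen_cons] at hlen; linarith
            obtain ⟨ψ, M, hψ, hd⟩ := ih q' (RES_tail hp) (RES_tail hq) hlen' hne'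
            refine ⟨ψ, M + s, hψ, ?_⟩
            simp only [phi, zero_add]
            rw [phi_offset ψ p' (M + s) s, phi_offset ψ q' (M + s) s,
              show M + s - s = M from by ring]
            intro h
            exact hd (by linarith)
          · -- t < s : symmetric
            have hlen' : s + eLen p' = t + eLen q' := by
              rw [eLen_cons, eLen_cons] at hlen; linarith
            have hq'pos : 0 < eLen q' := by
              have := eLen_nonneg hp'nn; linarith
            rcases q' with _ | ⟨⟨b', t'⟩, q''⟩
            · rw [eLen_nil] at hq'pos; linarith
            · have hbb : b' ≠ a := ((List.isChain_cons_cons.1 hq.1).1).symm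
              have ht' : 0 < t' := hq.2 (b', t') (by simp)
              obtain ⟨ψ, M, hψ, hd⟩ := sep_head_lt hbb ht hst ht'
                (fun x hx => hq'nn x (List.mem_cons_of_mem _ hx)) hp'nn
              exact ⟨ψ, M, hψ, fun h => hd h.symm⟩
        · exact sep_head_ne hab hs ht hp'nn hq'nn

end Separation

end ExpStr
end AuxMetric

open ExpStr in
/-- With unit costs (`w_ins = w_del = 1`, `w_sub(a,b) = 1` for `a ≠ b` and
`w_sub(a,a) = 0`) the exp-edit distance is a metric on `ℝ⁺`-exponent-strings. -/
theorem eDist_metric {α : Type*} [DecidableEq α]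
    (p q r : List (α × ℝ)) (hp : RES p) (hq : RES q) (hr : RES r) :
    eDist (fun _ => (1 : ℝ)) (fun _ => (1 : ℝ))
        (fun a b => if a = b then (0 : ℝ) else 1) p p = 0 ∧
    (p ≠ q → 0 < eDist (fun _ => (1 : ℝ)) (fun _ => (1 : ℝ))
        (fun a b => if a = b then (0 : ℝ) else 1) p q) ∧
    eDist (fun _ => (1 : ℝ)) (fun _ => (1 : ℝ))
        (fun a b => if a = b then (0 : ℝ) else 1) p q =
      eDist (fun _ => (1 : ℝ)) (fun _ => (1 : ℝ))
        (fun a b => if a = b then (0 : ℝ) else 1) q p ∧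
    eDist (fun _ => (1 : ℝ)) (fun _ => (1 : ℝ))
        (fun a b => if a = b then (0 : ℝ) else 1) p r ≤
      eDist (fun _ => (1 : ℝ)) (fun _ => (1 : ℝ))
          (fun a b => if a = b then (0 : ℝ) else 1) p q +
        eDist (fun _ => (1 : ℝ)) (fun _ => (1 : ℝ))
          (fun a b => if a = b then (0 : ℝ) else 1) q r := by
  classical
  have bddB : ∀ u v : List (α × ℝ), BddBelow {c | EditCost (fun _ => (1 : ℝ))
      (fun _ => (1 : ℝ)) (fun a b => if a = b then (0 : ℝ) else 1) u v c} :=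
    fun u v => ⟨0, fun c hc => editcost_nonneg hc⟩
  unfold eDist
  refine ⟨?_, ?_, ?_, ?_⟩
  · -- reflexivity
    apply le_antisymm
    · exact csInf_le (bddB p p) EditCost.refl
    · exact le_csInf ⟨0, EditCost.refl⟩ fun c hc => editcost_nonneg hc
  · -- positivity
    intro hne
    have hnonempty : {c | EditCost (fun _ => (1 : ℝ)) (fun _ => (1 : ℝ))
        (fun a b => if a = b then (0 : ℝ) else 1) p q c}.Nonempty :=
      ⟨_, editcost_nonempty hp hq⟩
    by_cases hlen : eLen p = eLen q
    · obtain ⟨ψ, M, hψ, hdiff⟩ := sep p q hp hq hlen hne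
      have hB : 0 < |phi ψ M 0 p - phi ψ M 0 q| := abs_pos.2 (sub_ne_zero.2 hdiff)
      have hle : |phi ψ M 0 p - phi ψ M 0 q| / 2 ≤ sInf {c | EditCost (fun _ => (1 : ℝ))
          (fun _ => (1 : ℝ)) (fun a b => if a = b then (0 : ℝ) else 1) p q c} := by
        apply le_csInf hnonempty
        intro c hc
        have := editcost_abs_bound (phi ψ M 0) 2 (fun u v c h => step_phi ψ M hψ h) hc
        linarith
      linarith
    · have hB : 0 < |eLen p - eLen q| := abs_pos.2 (sub_ne_zero.2 hlen)
      have hle : |eLen p - eLen q| ≤ sInf {c | EditCost (fun _ => (1 : ℝ))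
          (fun _ => (1 : ℝ)) (fun a b => if a = b then (0 : ℝ) else 1) p q c} := by
        apply le_csInf hnonempty
        intro c hc
        have := editcost_abs_bound eLen 1 (fun u v c h => step_len h) hc
        linarith
      linarith
  · -- symmetry
    congr 1
    ext c
    exact ⟨fun h => editcost_symm h, fun h => editcost_symm h⟩
  · -- triangle inequality
    have key : ∀ c₂ ∈ {c | EditCost (fun _ => (1 : ℝ)) (fun _ => (1 : ℝ))
        (fun a b => if a = b then (0 : ℝ) else 1) q r c},
        sInf {c | EditCost (fun _ => (1 : ℝ)) (fun _ => (1 : ℝ))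
          (fun a b => if a = b then (0 : ℝ) else 1) p r c} ≤
        sInf {c | EditCost (fun _ => (1 : ℝ)) (fun _ => (1 : ℝ))
          (fun a b => if a = b then (0 : ℝ) else 1) p q c} + c₂ := by
      intro c₂ hc₂
      have h1 : sInf {c | EditCost (fun _ => (1 : ℝ)) (fun _ => (1 : ℝ))
          (fun a b => if a = b then (0 : ℝ) else 1) p r c} - c₂ ≤
          sInf {c | EditCost (fun _ => (1 : ℝ)) (fun _ => (1 : ℝ))
            (fun a b => if a = b then (0 : ℝ) else 1) p q c} := by
        apply le_csInf ⟨_, editcost_nonempty hp hq⟩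
        intro c₁ hc₁
        have h2 := csInf_le (bddB p r) (Set.mem_setOf.2 (editcost_trans hc₁ hc₂))
        linarith
      linarith
    have h3 : sInf {c | EditCost (fun _ => (1 : ℝ)) (fun _ => (1 : ℝ))
        (fun a b => if a = b then (0 : ℝ) else 1) p r c} -
        sInf {c | EditCost (fun _ => (1 : ℝ)) (fun _ => (1 : ℝ))
          (fun a b => if a = b then (0 : ℝ) else 1) p q c} ≤
        sInf {c | EditCost (fun _ => (1 : ℝ)) (fun _ => (1 : ℝ))
          (fun a b => if a = b then (0 : ℝ) else 1) q r c} := by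
      apply le_csInf ⟨_, editcost_nonempty hq hr⟩
      intro c₂ hc₂
      linarith [key c₂ hc₂]
    linarith
end

section
/- For ℚ⁺-exponent-strings p₁ and p₂ (all exponents positive rationals), there exists a minimum-cost exp-edit sequence from p₁ to p₂ consisting only of ℚ⁺-exponent-strings, with total cost equal to dist(p₁, p₂). Equivalently, the exp-edit distance between two ℚ⁺-exponent-strings taken over all ℝ⁺-exponent-string intermediate terms equals the infimum restricted to ℚ⁺-exponent-string intermediate terms. -/
noncomputable section Aux
open ExpStr
namespace EAux
variable {α : Type*}

/-! ### rcat basics -/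

theorem rcat_nil_left [DecidableEq α] (q : List (α × ℝ)) : rcat ([] : List (α × ℝ)) q = q := by
  simp [rcat, eCat]

theorem rcat_nil_right [DecidableEq α] (p : List (α × ℝ)) : rcat p ([] : List (α × ℝ)) = p := by
  cases h : p.getLast? <;> simp [rcat, eCat, h]

theorem rcat_single_nil [DecidableEq α] (a : α) (s : ℝ) :
    rcat [(a, s)] ([] : List (α × ℝ)) = [(a, s)] := rcat_nil_right _

theorem rcat_single_cons [DecidableEq α] (a : α) (s : ℝ) (b : α) (t : ℝ) (q' : List (α × ℝ)) :
    rcat [(a, s)] ((b, t) :: q') =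
      if a = b then (a, s + t) :: q' else (a, s) :: (b, t) :: q' := by
  by_cases h : a = b <;> simp [rcat, eCat, h]

theorem rcat_cons [DecidableEq α] (b : α) (t : ℝ) (p' q : List (α × ℝ)) (hp : p' ≠ []) :
    rcat ((b, t) :: p') q = (b, t) :: rcat p' q := by
  match q with
  | [] => simp [rcat_nil_right]
  | (c, u) :: q' =>
    obtain ⟨⟨x, y⟩, hx⟩ : ∃ l, p'.getLast? = some l := by
      cases p' with
      | nil => simp at hp
      | cons z zs => exact ⟨_, List.getLast?_eq_getLast (by simp)⟩
    have h1 : ((b, t) :: p').getLast? = some (x, y) := by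
      rw [List.getLast?_cons]
      cases p' with
      | nil => simp at hp
      | cons z zs =>
        rw [List.getLast?_eq_getLast (by simp)] at hx
        rw [List.getLast?_eq_getLast (by simp)]
        simpa [List.getLastD] using congrArg (Option.getD · (b, t)) hx
    have hd : ((b, t) :: p').dropLast = (b, t) :: p'.dropLast := by
      cases p' with
      | nil => simp at hp
      | cons z zs => rfl
    by_cases hxc : x = c <;> simp [rcat, eCat, h1, hx, hxc, hd]

theorem rcat_single_assoc [DecidableEq α] (a : α) (s : ℝ) (p q : List (α × ℝ)) :
    rcat [(a, s)] (rcat p q) = rcat (rcat [(a, s)] p) q := by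
  match p with
  | [] => rw [rcat_nil_left, rcat_nil_right]
  | [(b, t)] =>
    match q with
    | [] => rw [rcat_nil_right, rcat_nil_right]
    | (c, u) :: q' =>
      by_cases hab : a = b
      · subst hab
        by_cases hbc : a = c
        · subst hbc
          simp [rcat_single_cons, add_assoc]
        · simp [rcat_single_cons, hbc]
      · by_cases hbc : b = c
        · subst hbc
          simp [rcat_cons a s [(b, t)] ((b, u) :: q') (by simp), rcat_single_cons, hab]
        · simp [rcat_cons a s [(b, t)] ((c, u) :: q') (by simp), rcat_single_cons, hab, hbc]
  | (b, t) :: (b', t') :: p'' =>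
    rw [rcat_cons b t ((b', t') :: p'') q (by simp), rcat_single_cons, rcat_single_cons]
    by_cases hab : a = b
    · simp only [if_pos hab]
      rw [rcat_cons a (s + t) ((b', t') :: p'') q (by simp)]
    · simp only [if_neg hab]
      rw [rcat_cons a s ((b, t) :: (b', t') :: p'') q (by simp),
        rcat_cons b t ((b', t') :: p'') q (by simp)]

end EAux

set_option linter.unusedSectionVars false
namespace EAux
open ExpStr
variable {α : Type*}
variable (wdel wins : α → ℝ) (wsub : α → α → ℝ)

noncomputable def lev : List α → List α → ℝ
  | [], [] => 0
  | [], b :: v => wins b + lev [] v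
  | a :: u, [] => wdel a + lev u []
  | a :: u, b :: v =>
      min (wdel a + lev u (b :: v)) (min (wins b + lev (a :: u) v) (wsub a b + lev u v))
  termination_by u v => (u.length, v.length)

@[simp] theorem lev_nil_nil : lev wdel wins wsub [] [] = 0 := by rw [lev]

theorem lev_nil_cons (b : α) (v : List α) :
    lev wdel wins wsub [] (b :: v) = wins b + lev wdel wins wsub [] v := by rw [lev]

theorem lev_cons_nil (a : α) (u : List α) :
    lev wdel wins wsub (a :: u) [] = wdel a + lev wdel wins wsub u [] := by rw [lev]

theorem lev_cons_cons (a b : α) (u v : List α) :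
    lev wdel wins wsub (a :: u) (b :: v) =
      min (wdel a + lev wdel wins wsub u (b :: v))
        (min (wins b + lev wdel wins wsub (a :: u) v)
          (wsub a b + lev wdel wins wsub u v)) := by rw [lev]

variable (hdel : ∀ a, 0 < wdel a) (hins : ∀ a, 0 < wins a)
    (hsub0 : ∀ a, wsub a a = 0) (hsubpos : ∀ a b, a ≠ b → 0 < wsub a b)
    (htri₁ : ∀ a b c, wsub a c ≤ wsub a b + wsub b c)
    (htri₃ : ∀ a b, wins b ≤ wins a + wsub a b)
    (htri₄ : ∀ a b, wdel a ≤ wsub a b + wdel b)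

include hsub0 hsubpos in
theorem wsub_nonneg (a b : α) : 0 ≤ wsub a b := by
  rcases eq_or_ne a b with h | h
  · rw [h, hsub0]
  · exact (hsubpos a b h).le

include hdel hins hsub0 hsubpos in
theorem lev_nonneg (u v : List α) : 0 ≤ lev wdel wins wsub u v := by
  induction u generalizing v with
  | nil =>
    induction v with
    | nil => simp
    | cons b v ih => rw [lev_nil_cons]; have := hins b; linarith
  | cons a u ihu =>
    induction v with
    | nil => rw [lev_cons_nil]; have := hdel a; have := ihu []; linarith
    | cons b v ihv =>
      rw [lev_cons_cons]
      have h1 := ihu (b :: v)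
      have h2 := ihu v
      have h3 := wsub_nonneg wsub hsub0 hsubpos a b
      have := hdel a; have := hins b
      simp only [le_min_iff]
      constructor
      · linarith
      constructor
      · linarith
      · linarith

theorem lev_le_del (a : α) (u v : List α) :
    lev wdel wins wsub (a :: u) v ≤ wdel a + lev wdel wins wsub u v := by
  cases v with
  | nil => rw [lev_cons_nil]
  | cons b v => rw [lev_cons_cons]; exact min_le_left _ _

theorem lev_le_ins (b : α) (u v : List α) :
    lev wdel wins wsub u (b :: v) ≤ wins b + lev wdel wins wsub u v := by
  cases u with
  | nil => rw [lev_nil_cons]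
  | cons a u => rw [lev_cons_cons]; exact le_trans (min_le_right _ _) (min_le_left _ _)

theorem lev_le_sub (a b : α) (u v : List α) :
    lev wdel wins wsub (a :: u) (b :: v) ≤ wsub a b + lev wdel wins wsub u v := by
  rw [lev_cons_cons]; exact le_trans (min_le_right _ _) (min_le_right _ _)

include hsub0 in
theorem lev_self_le (u : List α) : lev wdel wins wsub u u ≤ 0 := by
  induction u with
  | nil => simp
  | cons a u ih =>
    have := lev_le_sub wdel wins wsub a a u u
    rw [hsub0] at this
    linarith

theorem min3_le_min3 {a b c a' b' c' : ℝ} (h1 : a ≤ a') (h2 : b ≤ b') (h3 : c ≤ c') :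
    min a (min b c) ≤ min a' (min b' c') :=
  le_min (le_trans (min_le_left _ _) h1)
    (le_min (le_trans (le_trans (min_le_right _ _) (min_le_left _ _)) h2)
      (le_trans (le_trans (min_le_right _ _) (min_le_right _ _)) h3))

theorem min3_add (A B C K : ℝ) : min A (min B C) + K = min (A + K) (min (B + K) (C + K)) := by
  rw [min_add_add_right, min_add_add_right]

-- single-letter drop on the right
include hdel hins hsub0 hsubpos htri₄ in
theorem lev_drop1 (a : α) (y : List α) : ∀ s : List α,
    lev wdel wins wsub s y ≤ lev wdel wins wsub s (a :: y) + wdel a := by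
  intro s
  induction s with
  | nil =>
    rw [lev_nil_cons]
    have := hins a; have := hdel a; linarith
  | cons d s ih =>
    rw [lev_cons_cons]
    have hb1 : lev wdel wins wsub (d :: s) y ≤ (wdel d + lev wdel wins wsub s (a :: y)) + wdel a := by
      have := lev_le_del wdel wins wsub d s y
      linarith
    have hb2 : lev wdel wins wsub (d :: s) y ≤ (wins a + lev wdel wins wsub (d :: s) y) + wdel a := by
      have := hins a; have := hdel a; linarith
    have hb3 : lev wdel wins wsub (d :: s) y ≤ (wsub d a + lev wdel wins wsub s y) + wdel a := by
      have h4 := htri₄ d a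
      have := lev_le_del wdel wins wsub d s y
      linarith
    rw [min3_add]
    exact le_min hb1 (le_min hb2 hb3)

-- single-letter substitution on the right
include htri₁ htri₃ in
theorem lev_sub1 (a b : α) (y : List α) : ∀ s : List α,
    lev wdel wins wsub s (b :: y) ≤ lev wdel wins wsub s (a :: y) + wsub a b := by
  intro s
  induction s with
  | nil =>
    rw [lev_nil_cons, lev_nil_cons]
    have := htri₃ a b; linarith
  | cons d s ih =>
    rw [lev_cons_cons, lev_cons_cons, min3_add]
    refine min3_le_min3 ?_ ?_ ?_
    · have := ih; linarith [lev_le_del wdel wins wsub d s (a :: y)]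
    · have := htri₃ a b; linarith
    · have := htri₁ d a b; linarith

end EAux

namespace EAux
open ExpStr
variable {α : Type*}
variable (wdel wins : α → ℝ) (wsub : α → α → ℝ)
variable (hdel : ∀ a, 0 < wdel a) (hins : ∀ a, 0 < wins a)
    (hsub0 : ∀ a, wsub a a = 0) (hsubpos : ∀ a b, a ≠ b → 0 < wsub a b)
    (htri₁ : ∀ a b c, wsub a c ≤ wsub a b + wsub b c)
    (htri₃ : ∀ a b, wins b ≤ wins a + wsub a b)
    (htri₄ : ∀ a b, wdel a ≤ wsub a b + wdel b)

include hdel hins hsub0 hsubpos htri₄ in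
theorem lev_del_right (a : α) (y : List α) : ∀ (x s : List α),
    lev wdel wins wsub s (x ++ y) ≤ lev wdel wins wsub s (x ++ a :: y) + wdel a := by
  intro x
  induction x with
  | nil => exact fun s => lev_drop1 wdel wins wsub hdel hins hsub0 hsubpos htri₄ a y s
  | cons c x ihx =>
    intro s
    induction s with
    | nil =>
      simp only [List.cons_append, lev_nil_cons]
      have := ihx []; linarith [ihx ([] : List α)]
    | cons d s ihs =>
      simp only [List.cons_append] at ihs
      simp only [List.cons_append, lev_cons_cons, min3_add]
      refine min3_le_min3 ?_ ?_ ?_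
      · linarith [ihs]
      · linarith [ihx (d :: s)]
      · linarith [ihx s]

include hins hsub0 in
theorem lev_ins_right (a : α) (y : List α) : ∀ (x s : List α),
    lev wdel wins wsub s (x ++ a :: y) ≤ lev wdel wins wsub s (x ++ y) + wins a := by
  intro x
  induction x with
  | nil => exact fun s => by rw [add_comm]; exact lev_le_ins wdel wins wsub a s y
  | cons c x ihx =>
    intro s
    induction s with
    | nil =>
      simp only [List.cons_append, lev_nil_cons]
      linarith [ihx ([] : List α)]
    | cons d s ihs =>
      simp only [List.cons_append] at ihs
      simp only [List.cons_append, lev_cons_cons, min3_add]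
      refine min3_le_min3 ?_ ?_ ?_
      · linarith [ihs]
      · linarith [ihx (d :: s)]
      · linarith [ihx s]

include htri₁ htri₃ in
theorem lev_sub_right (a b : α) (y : List α) : ∀ (x s : List α),
    lev wdel wins wsub s (x ++ b :: y) ≤ lev wdel wins wsub s (x ++ a :: y) + wsub a b := by
  intro x
  induction x with
  | nil => exact fun s => lev_sub1 wdel wins wsub htri₁ htri₃ a b y s
  | cons c x ihx =>
    intro s
    induction s with
    | nil =>
      simp only [List.cons_append, lev_nil_cons]
      linarith [ihx ([] : List α)]
    | cons d s ihs =>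
      simp only [List.cons_append] at ihs
      simp only [List.cons_append, lev_cons_cons, min3_add]
      refine min3_le_min3 ?_ ?_ ?_
      · linarith [ihs]
      · linarith [ihx (d :: s)]
      · linarith [ihx s]

include hdel hins hsub0 hsubpos htri₁ htri₃ htri₄ in
theorem lev_min {u v : List α} {c : ℝ}
    (h : SEditCost wdel wins wsub u v c) : lev wdel wins wsub u v ≤ c := by
  induction h with
  | refl => exact lev_self_le wdel wins wsub hsub0 u
  | @step p q cc cc' hpq hs ih =>
    obtain ⟨x, y, hcase⟩ := hs
    rcases hcase with ⟨b, hp, hq, hc⟩ | ⟨b, hp, hq, hc⟩ | ⟨b, b', hp, hq, hc⟩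
    · subst hp hq hc
      linarith [lev_ins_right wdel wins wsub hins hsub0 b y x u]
    · subst hp hq hc
      linarith [lev_del_right wdel wins wsub hdel hins hsub0 hsubpos htri₄ b y x u]
    · subst hp hq hc
      linarith [lev_sub_right wdel wins wsub htri₁ htri₃ b b' y x u]

/-! ### SEditCost machinery -/

theorem SEditCost_trans {u v w : List α} {c c' : ℝ}
    (h1 : SEditCost wdel wins wsub u v c) (h2 : SEditCost wdel wins wsub v w c') :
    SEditCost wdel wins wsub u w (c + c') := by
  induction h2 with
  | refl => simpa using h1
  | @step p q d d' hpq hs ih =>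
    have := ih.step hs
    rwa [add_assoc] at this

def SC (u v : List α) (c : ℝ) : Prop :=
  ∃ c', SEditCost wdel wins wsub u v c' ∧ c' ≤ c

theorem SC_refl {c : ℝ} (h : 0 ≤ c) (u : List α) : SC wdel wins wsub u u c :=
  ⟨0, .refl, h⟩

theorem SC_of_eq {u v : List α} {c : ℝ} (h : u = v) (hc : 0 ≤ c) : SC wdel wins wsub u v c :=
  h ▸ SC_refl wdel wins wsub hc u

theorem SC_mono {u v : List α} {c c' : ℝ} (h : SC wdel wins wsub u v c) (hc : c ≤ c') :
    SC wdel wins wsub u v c' := by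
  obtain ⟨d, hd, hdc⟩ := h
  exact ⟨d, hd, hdc.trans hc⟩

theorem SC_trans {u v w : List α} {c c' : ℝ} (h1 : SC wdel wins wsub u v c)
    (h2 : SC wdel wins wsub v w c') : SC wdel wins wsub u w (c + c') := by
  obtain ⟨d, hd, hdc⟩ := h1
  obtain ⟨e, he, hec⟩ := h2
  exact ⟨d + e, SEditCost_trans wdel wins wsub hd he, by linarith⟩

theorem SC_ins (x y : List α) (b : α) : SC wdel wins wsub (x ++ y) (x ++ b :: y) (wins b) :=
  ⟨0 + wins b, .step .refl ⟨x, y, Or.inl ⟨b, rfl, rfl, rfl⟩⟩, by simp⟩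

theorem SC_del (x y : List α) (b : α) : SC wdel wins wsub (x ++ b :: y) (x ++ y) (wdel b) :=
  ⟨0 + wdel b, .step .refl ⟨x, y, Or.inr (Or.inl ⟨b, rfl, rfl, rfl⟩)⟩, by simp⟩

theorem SC_sub (x y : List α) (a b : α) :
    SC wdel wins wsub (x ++ a :: y) (x ++ b :: y) (wsub a b) :=
  ⟨0 + wsub a b, .step .refl ⟨x, y, Or.inr (Or.inr ⟨a, b, rfl, rfl, rfl⟩)⟩, by simp⟩

theorem SEditCost_append_left (x : List α) {u v : List α} {c : ℝ}
    (h : SEditCost wdel wins wsub u v c) : SEditCost wdel wins wsub (x ++ u) (x ++ v) c := by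
  induction h with
  | refl => exact .refl
  | @step p q d d' hpq hs ih =>
    refine ih.step ?_
    obtain ⟨p₁, p₂, hcase⟩ := hs
    refine ⟨x ++ p₁, p₂, ?_⟩
    rcases hcase with ⟨b, hp, hq, hc⟩ | ⟨b, hp, hq, hc⟩ | ⟨b, b', hp, hq, hc⟩
    · exact Or.inl ⟨b, by simp [hp], by simp [hq], hc⟩
    · exact Or.inr (Or.inl ⟨b, by simp [hp], by simp [hq], hc⟩)
    · exact Or.inr (Or.inr ⟨b, b', by simp [hp], by simp [hq], hc⟩)

theorem SC_append_left (x : List α) {u v : List α} {c : ℝ} (h : SC wdel wins wsub u v c) :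
    SC wdel wins wsub (x ++ u) (x ++ v) c := by
  obtain ⟨d, hd, hdc⟩ := h
  exact ⟨d, SEditCost_append_left wdel wins wsub x hd, hdc⟩

include hdel in
theorem SC_blockdel (a : α) (y : List α) : ∀ (k : ℕ) (x : List α),
    SC wdel wins wsub (x ++ (List.replicate k a ++ y)) (x ++ y) (k * wdel a) := by
  intro k
  induction k with
  | zero => intro x; exact SC_of_eq wdel wins wsub (by simp) (by simp)
  | succ k ih =>
    intro x
    have h1 : SC wdel wins wsub (x ++ (List.replicate (k + 1) a ++ y))
        (x ++ (List.replicate k a ++ y)) (wdel a) := by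
      have := SC_del wdel wins wsub x (List.replicate k a ++ y) a
      simpa [List.replicate_succ] using this
    have := SC_trans wdel wins wsub h1 (ih x)
    exact SC_mono wdel wins wsub this (by push_cast; linarith)

include hins in
theorem SC_blockins (a : α) (y : List α) : ∀ (k : ℕ) (x : List α),
    SC wdel wins wsub (x ++ y) (x ++ (List.replicate k a ++ y)) (k * wins a) := by
  intro k
  induction k with
  | zero => intro x; exact SC_of_eq wdel wins wsub (by simp) (by simp)
  | succ k ih =>
    intro x
    have h1 : SC wdel wins wsub (x ++ (List.replicate k a ++ y))
        (x ++ (List.replicate (k + 1) a ++ y)) (wins a) := by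
      have := SC_ins wdel wins wsub x (List.replicate k a ++ y) a
      simpa [List.replicate_succ] using this
    have := SC_trans wdel wins wsub (ih x) h1
    exact SC_mono wdel wins wsub this (by push_cast; linarith)

theorem SC_blocksub (a b : α) (y : List α) : ∀ (k : ℕ) (x : List α),
    SC wdel wins wsub (x ++ (List.replicate k a ++ y)) (x ++ (List.replicate k b ++ y))
      (k * wsub a b) := by
  intro k
  induction k with
  | zero => intro x; exact SC_of_eq wdel wins wsub (by simp) (by simp)
  | succ k ih =>
    intro x
    have h1 : SC wdel wins wsub (x ++ (List.replicate (k + 1) a ++ y))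
        (x ++ (b :: (List.replicate k a ++ y))) (wsub a b) := by
      have := SC_sub wdel wins wsub x (List.replicate k a ++ y) a b
      simpa [List.replicate_succ] using this
    have h2 := ih (x ++ [b])
    have h2' : SC wdel wins wsub (x ++ (b :: (List.replicate k a ++ y)))
        (x ++ (List.replicate (k + 1) b ++ y)) (k * wsub a b) := by
      have e1 : x ++ [b] ++ (List.replicate k a ++ y) = x ++ (b :: (List.replicate k a ++ y)) := by
        simp
      have e2 : x ++ [b] ++ (List.replicate k b ++ y)
          = x ++ (List.replicate (k + 1) b ++ y) := by
        simp [List.replicate_succ]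
      rwa [e1, e2] at h2
    have := SC_trans wdel wins wsub h1 h2'
    exact SC_mono wdel wins wsub this (by push_cast; linarith)

end EAux

namespace EAux
open ExpStr
variable {α : Type*}
variable (wdel wins : α → ℝ) (wsub : α → α → ℝ)

def blow (m : ℕ) (w : List α) : List α := w.flatMap fun a => List.replicate m a

@[simp] theorem blow_nil (m : ℕ) : blow m ([] : List α) = [] := rfl

@[simp] theorem blow_cons (m : ℕ) (a : α) (w : List α) :
    blow m (a :: w) = List.replicate m a ++ blow m w := rfl

def padB (m i : ℕ) : List α → List α
  | [] => []
  | a :: u' => List.replicate i a ++ blow m u'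

theorem lev_nil_rep (b : α) : ∀ (k : ℕ) (X : List α),
    lev wdel wins wsub [] (List.replicate k b ++ X) = k * wins b + lev wdel wins wsub [] X := by
  intro k
  induction k with
  | zero => intro X; simp
  | succ k ih =>
    intro X
    rw [List.replicate_succ, List.cons_append, lev_nil_cons, ih]
    push_cast; ring

theorem lev_rep_nil (a : α) : ∀ (k : ℕ) (X : List α),
    lev wdel wins wsub (List.replicate k a ++ X) [] = k * wdel a + lev wdel wins wsub X [] := by
  intro k
  induction k with
  | zero => intro X; simp
  | succ k ih =>
    intro X
    rw [List.replicate_succ, List.cons_append, lev_cons_nil, ih]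
    push_cast; ring

theorem lev_nil_blow (m : ℕ) (w : List α) :
    lev wdel wins wsub [] (blow m w) = m * lev wdel wins wsub [] w := by
  induction w with
  | nil => simp
  | cons b w ih =>
    rw [blow_cons, lev_nil_rep, ih, lev_nil_cons]
    ring

theorem lev_blow_nil (m : ℕ) (w : List α) :
    lev wdel wins wsub (blow m w) [] = m * lev wdel wins wsub w [] := by
  induction w with
  | nil => simp
  | cons b w ih =>
    rw [blow_cons, lev_rep_nil, ih, lev_cons_nil]
    ring

noncomputable def phi (m i : ℕ) (u : List α) (j : ℕ) (v : List α) : ℝ :=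
  match u, v with
  | [], [] => 0
  | [], b :: v' => (m : ℝ) * lev wdel wins wsub [] v' + (j : ℝ) * wins b
  | a :: u', [] => (m : ℝ) * lev wdel wins wsub u' [] + (i : ℝ) * wdel a
  | a :: u', b :: v' =>
      if j ≤ i then
        (m : ℝ) * lev wdel wins wsub u' v'
          + (i : ℝ) * (lev wdel wins wsub (a :: u') v' - lev wdel wins wsub u' v')
          + (j : ℝ) * (lev wdel wins wsub (a :: u') (b :: v')
              - lev wdel wins wsub (a :: u') v')
      else
        (m : ℝ) * lev wdel wins wsub u' v'
          + (j : ℝ) * (lev wdel wins wsub u' (b :: v') - lev wdel wins wsub u' v')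
          + (i : ℝ) * (lev wdel wins wsub (a :: u') (b :: v')
              - lev wdel wins wsub u' (b :: v'))

theorem phi_del (m i j : ℕ) (a b : α) (u' v' : List α) :
    phi wdel wins wsub m (i + 1) (a :: u') j (b :: v')
      ≤ wdel a + phi wdel wins wsub m i (a :: u') j (b :: v') := by
  rcases le_or_gt j i with h | h
  · have h1 : j ≤ i + 1 := h.trans (Nat.le_succ i)
    simp only [phi, if_pos h, if_pos h1]
    push_cast
    linarith [lev_le_del wdel wins wsub a u' v']
  · have h2 : ¬ j ≤ i := not_le.mpr h
    rcases le_or_gt j (i + 1) with h1 | h1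
    · obtain rfl : j = i + 1 := le_antisymm h1 h
      simp only [phi, if_pos (le_refl (i + 1)), if_neg h2]
      push_cast
      linarith [lev_le_del wdel wins wsub a u' (b :: v')]
    · have h3 : ¬ j ≤ i + 1 := not_le.mpr h1
      simp only [phi, if_neg h3, if_neg h2]
      push_cast
      linarith [lev_le_del wdel wins wsub a u' (b :: v')]

theorem phi_ins (m i j : ℕ) (a b : α) (u' v' : List α) :
    phi wdel wins wsub m i (a :: u') (j + 1) (b :: v')
      ≤ wins b + phi wdel wins wsub m i (a :: u') j (b :: v') := by
  rcases le_or_gt (j + 1) i with h1 | h1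
  · have h : j ≤ i := (Nat.le_succ j).trans h1
    simp only [phi, if_pos h, if_pos h1]
    push_cast
    linarith [lev_le_ins wdel wins wsub b (a :: u') v']
  · have h3 : ¬ j + 1 ≤ i := not_le.mpr h1
    rcases le_or_gt j i with h | h
    · obtain rfl : j = i := le_antisymm h (by omega)
      simp only [phi, if_pos (le_refl j), if_neg h3]
      push_cast
      linarith [lev_le_ins wdel wins wsub b u' v']
    · have h2 : ¬ j ≤ i := not_le.mpr h
      simp only [phi, if_neg h2, if_neg h3]
      push_cast
      linarith [lev_le_ins wdel wins wsub b u' v']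

theorem phi_sub (m i j : ℕ) (a b : α) (u' v' : List α) :
    phi wdel wins wsub m (i + 1) (a :: u') (j + 1) (b :: v')
      ≤ wsub a b + phi wdel wins wsub m i (a :: u') j (b :: v') := by
  rcases le_or_gt j i with h | h
  · have h1 : j + 1 ≤ i + 1 := Nat.succ_le_succ h
    simp only [phi, if_pos h, if_pos h1]
    push_cast
    linarith [lev_le_sub wdel wins wsub a b u' v']
  · have h2 : ¬ j ≤ i := not_le.mpr h
    have h3 : ¬ j + 1 ≤ i + 1 := fun hc => h2 (Nat.le_of_succ_le_succ hc)
    simp only [phi, if_neg h2, if_neg h3]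
    push_cast
    linarith [lev_le_sub wdel wins wsub a b u' v']

theorem phi_le (m : ℕ) : ∀ (L : ℕ) (u v : List α), u.length + v.length ≤ L →
    ∀ (i j : ℕ), i ≤ m → j ≤ m → (u = [] → i = 0) → (v = [] → j = 0) →
    phi wdel wins wsub m i u j v
      ≤ lev wdel wins wsub (padB m i u) (padB m j v) := by
  intro L
  induction L with
  | zero =>
    intro u v hL i j hi hj hu hv
    have hu0 : u = [] := by cases u <;> simp_all
    have hv0 : v = [] := by cases u <;> cases v <;> simp_all
    subst hu0 hv0
    rw [hu rfl, hv rfl]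
    simp [phi, padB]
  | succ L IHL =>
    intro u v hL
    suffices H : ∀ (K i j : ℕ), i + j = K → i ≤ m → j ≤ m → (u = [] → i = 0) →
        (v = [] → j = 0) →
        phi wdel wins wsub m i u j v
          ≤ lev wdel wins wsub (padB m i u) (padB m j v) by
      exact fun i j => H (i + j) i j rfl
    intro K
    induction K using Nat.strong_induction_on with
    | _ K IHK =>
      intro i j hij hi hj hu hv
      match u, v with
      | [], [] => simp [phi, padB]
      | [], b :: v' =>
        obtain rfl : i = 0 := hu rfl
        match j, v' with
        | 0, [] => simp [phi, padB]
        | 0, c :: v'' =>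
          have heq : phi wdel wins wsub m 0 ([] : List α) 0 (b :: c :: v'')
              = phi wdel wins wsub m 0 ([] : List α) m (c :: v'') := by
            simp only [phi, lev_nil_cons]
            push_cast; ring
          have hpad : padB m 0 (b :: c :: v'') = (padB m m (c :: v'') : List α) := by
            simp [padB]
          rw [heq, hpad]
          exact IHL [] (c :: v'') (by simp at hL ⊢; omega) 0 m (Nat.zero_le _) le_rfl
            (fun _ => rfl) (by simp)
        | j'' + 1, v' =>
          have heq : phi wdel wins wsub m 0 ([] : List α) (j'' + 1) (b :: v')
              = wins b + phi wdel wins wsub m 0 ([] : List α) j'' (b :: v') := by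
            simp only [phi]; push_cast; ring
          have hpad : padB m (j'' + 1) (b :: v') = b :: padB m j'' (b :: v') := by
            simp [padB, List.replicate_succ]
          rw [heq, hpad]
          have hstep := IHK (0 + j'') (by omega) 0 j'' rfl (Nat.zero_le _) (by omega)
            (fun _ => rfl) (by simp)
          calc wins b + phi wdel wins wsub m 0 ([] : List α) j'' (b :: v')
              ≤ wins b + lev wdel wins wsub (padB m 0 ([] : List α)) (padB m j'' (b :: v')) := by
                linarith
            _ = lev wdel wins wsub ([] : List α) (b :: padB m j'' (b :: v')) := by
                rw [lev_nil_cons]; rfl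
      | a :: u', [] =>
        obtain rfl : j = 0 := hv rfl
        match i, u' with
        | 0, [] => simp [phi, padB]
        | 0, a' :: u'' =>
          have heq : phi wdel wins wsub m 0 (a :: a' :: u'') 0 ([] : List α)
              = phi wdel wins wsub m m (a' :: u'') 0 ([] : List α) := by
            simp only [phi, lev_cons_nil]
            push_cast; ring
          have hpad : padB m 0 (a :: a' :: u'') = (padB m m (a' :: u'') : List α) := by
            simp [padB]
          rw [heq, hpad]
          exact IHL (a' :: u'') [] (by simp at hL ⊢; omega) m 0 le_rfl (Nat.zero_le _)
            (by simp) (fun _ => rfl)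
        | i'' + 1, u' =>
          have heq : phi wdel wins wsub m (i'' + 1) (a :: u') 0 ([] : List α)
              = wdel a + phi wdel wins wsub m i'' (a :: u') 0 ([] : List α) := by
            simp only [phi]; push_cast; ring
          have hpad : padB m (i'' + 1) (a :: u') = a :: padB m i'' (a :: u') := by
            simp [padB, List.replicate_succ]
          rw [heq, hpad]
          have hstep := IHK (i'' + 0) (by omega) i'' 0 rfl (by omega) (Nat.zero_le _)
            (by simp) (fun _ => rfl)
          calc wdel a + phi wdel wins wsub m i'' (a :: u') 0 ([] : List α)
              ≤ wdel a + lev wdel wins wsub (padB m i'' (a :: u')) (padB m 0 ([] : List α)) := by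
                linarith
            _ = lev wdel wins wsub (a :: padB m i'' (a :: u')) ([] : List α) := by
                rw [lev_cons_nil]; rfl
      | a :: u', b :: v' =>
        match hi0 : i, u' with
        | 0, [] =>
          have heq : phi wdel wins wsub m 0 [a] j (b :: v')
              = phi wdel wins wsub m 0 ([] : List α) j (b :: v') := by
            rcases Nat.eq_zero_or_pos j with rfl | hjpos
            · simp only [phi, if_pos (le_refl 0)]
              push_cast; ring
            · simp only [phi, if_neg (by omega : ¬ j ≤ 0), lev_nil_cons]
              push_cast; ring
          have hpad : padB m 0 [a] = (padB m 0 ([] : List α) : List α) := by simp [padB]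
          rw [heq, hpad]
          exact IHL [] (b :: v') (by simp at hL ⊢; omega) 0 j (Nat.zero_le _) hj
            (fun _ => rfl) (by simp)
        | 0, a' :: u'' =>
          have heq : phi wdel wins wsub m 0 (a :: a' :: u'') j (b :: v')
              = phi wdel wins wsub m m (a' :: u'') j (b :: v') := by
            rcases Nat.eq_zero_or_pos j with rfl | hjpos
            · simp only [phi, if_pos (le_refl 0), if_pos (Nat.zero_le m)]
              push_cast; ring
            · simp only [phi, if_neg (by omega : ¬ j ≤ 0), if_pos hj]
              push_cast; ring
          have hpad : padB m 0 (a :: a' :: u'') = (padB m m (a' :: u'') : List α) := by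
            simp [padB]
          rw [heq, hpad]
          exact IHL (a' :: u'') (b :: v') (by simp at hL ⊢; omega) m j le_rfl hj
            (by simp) (by simp)
        | i' + 1, u' =>
          match hj0 : j, v' with
          | 0, [] =>
            have heq : phi wdel wins wsub m (i' + 1) (a :: u') 0 [b]
                = phi wdel wins wsub m (i' + 1) (a :: u') 0 ([] : List α) := by
              simp only [phi, if_pos (Nat.zero_le (i' + 1)), lev_cons_nil]
              push_cast; ring
            have hpad : padB m 0 [b] = (padB m 0 ([] : List α) : List α) := by simp [padB]
            rw [heq, hpad]
            exact IHL (a :: u') [] (by simp at hL ⊢; omega) (i' + 1) 0 hi (Nat.zero_le _)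
              (by simp) (fun _ => rfl)
          | 0, c :: v'' =>
            have heq : phi wdel wins wsub m (i' + 1) (a :: u') 0 (b :: c :: v'')
                = phi wdel wins wsub m (i' + 1) (a :: u') m (c :: v'') := by
              rcases eq_or_lt_of_le hi with him | him
              · simp only [phi, if_pos (Nat.zero_le (i' + 1)), if_pos (le_of_eq him.symm)]
                rw [← him]
                push_cast; ring
              · simp only [phi, if_pos (Nat.zero_le (i' + 1)),
                  if_neg (by omega : ¬ m ≤ i' + 1), lev_nil_cons]
                push_cast; ring
            have hpad : padB m 0 (b :: c :: v'') = (padB m m (c :: v'') : List α) := by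
              simp [padB]
            rw [heq, hpad]
            exact IHL (a :: u') (c :: v'') (by simp at hL ⊢; omega) (i' + 1) m hi le_rfl
              (by simp) (by simp)
          | j'' + 1, v' =>
            have hpad1 : padB m (i' + 1) (a :: u') = a :: padB m i' (a :: u') := by
              simp [padB, List.replicate_succ]
            have hpad2 : padB m (j'' + 1) (b :: v') = b :: padB m j'' (b :: v') := by
              simp [padB, List.replicate_succ]
            rw [hpad1, hpad2, lev_cons_cons]
            refine le_min ?_ (le_min ?_ ?_)
            · have hS := phi_del wdel wins wsub m i' (j'' + 1) a b u' v'
              have hIH := IHK (i' + (j'' + 1)) (by omega) i' (j'' + 1) rfl (by omega) hj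
                (by simp) (by simp)
              rw [← hpad2]
              linarith
            · have hS := phi_ins wdel wins wsub m (i' + 1) j'' a b u' v'
              have hIH := IHK ((i' + 1) + j'') (by omega) (i' + 1) j'' rfl hi (by omega)
                (by simp) (by simp)
              rw [← hpad1]
              linarith
            · have hS := phi_sub wdel wins wsub m i' j'' a b u' v'
              have hIH := IHK (i' + j'') (by omega) i' j'' rfl (by omega) (by omega)
                (by simp) (by simp)
              linarith

theorem blow_le (m : ℕ) (u v : List α) :
    (m : ℝ) * lev wdel wins wsub u v ≤ lev wdel wins wsub (blow m u) (blow m v) := by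
  match u, v with
  | [], [] => simp
  | [], b :: v' =>
    simp only [blow_nil]
    rw [lev_nil_blow]
  | a :: u', [] =>
    simp only [blow_nil]
    rw [lev_blow_nil]
  | a :: u', b :: v' =>
    have h := phi_le wdel wins wsub m ((a :: u').length + (b :: v').length)
      (a :: u') (b :: v') le_rfl m m le_rfl le_rfl (by simp) (by simp)
    have heq : phi wdel wins wsub m m (a :: u') m (b :: v')
        = (m : ℝ) * lev wdel wins wsub (a :: u') (b :: v') := by
      simp only [phi, if_pos (le_refl m)]
      push_cast; ring
    have hpad1 : padB m m (a :: u') = blow m (a :: u') := by simp [padB]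
    have hpad2 : padB m m (b :: v') = blow m (b :: v') := by simp [padB]
    rw [heq, hpad1, hpad2] at h
    exact h

end EAux

namespace EAux
open ExpStr
variable {α : Type*}
variable (wdel wins : α → ℝ) (wsub : α → α → ℝ)
variable (hdel : ∀ a, 0 < wdel a) (hins : ∀ a, 0 < wins a)
    (hsub0 : ∀ a, wsub a a = 0) (hsubpos : ∀ a b, a ≠ b → 0 < wsub a b)

/-- floor-word of an exponent string at scale `n` -/
def fl (n : ℕ) (p : List (α × ℝ)) : List α :=
  p.flatMap fun x => List.replicate ⌊(n : ℝ) * x.2⌋₊ x.1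

@[simp] theorem fl_nil (n : ℕ) : fl n ([] : List (α × ℝ)) = [] := rfl

theorem fl_cons (n : ℕ) (a : α) (s : ℝ) (p : List (α × ℝ)) :
    fl n ((a, s) :: p) = List.replicate ⌊(n : ℝ) * s⌋₊ a ++ fl n p := rfl

theorem fl_append (n : ℕ) (p q : List (α × ℝ)) : fl n (p ++ q) = fl n p ++ fl n q :=
  List.flatMap_append

theorem fl_single (n : ℕ) (a : α) (s : ℝ) :
    fl n [(a, s)] = List.replicate ⌊(n : ℝ) * s⌋₊ a := by
  simp [fl]

theorem floor_add_between {x y : ℝ} (hx : 0 ≤ x) (hy : 0 ≤ y) :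
    ⌊x⌋₊ + ⌊y⌋₊ ≤ ⌊x + y⌋₊ ∧ ⌊x + y⌋₊ ≤ ⌊x⌋₊ + ⌊y⌋₊ + 1 := by
  constructor
  · apply Nat.le_floor
    push_cast
    have h1 := Nat.floor_le hx
    have h2 := Nat.floor_le hy
    linarith
  · have h3 := Nat.lt_floor_add_one x
    have h4 := Nat.lt_floor_add_one y
    have : ⌊x + y⌋₊ < ⌊x⌋₊ + ⌊y⌋₊ + 2 := by
      rw [Nat.floor_lt (by linarith)]
      push_cast
      linarith
    omega

include hdel in
theorem SC_rep_del (X Y : List α) (a : α) {c d : ℕ} (hcd : c ≤ d) (hd : d ≤ c + 1) :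
    SC wdel wins wsub (X ++ (List.replicate d a ++ Y)) (X ++ (List.replicate c a ++ Y))
      (wdel a) := by
  have hb := SC_blockdel wdel wins wsub hdel a Y (d - c) (X ++ List.replicate c a)
  have e1 : (X ++ List.replicate c a) ++ (List.replicate (d - c) a ++ Y)
      = X ++ (List.replicate d a ++ Y) := by
    rw [List.append_assoc, ← List.append_assoc (List.replicate c a), ← List.replicate_add,
      Nat.add_sub_cancel' hcd]
  have e2 : (X ++ List.replicate c a) ++ Y = X ++ (List.replicate c a ++ Y) := by
    rw [List.append_assoc]
  rw [e1, e2] at hb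
  refine SC_mono wdel wins wsub hb ?_
  have : ((d - c : ℕ) : ℝ) ≤ 1 := by
    have : d - c ≤ 1 := by omega
    exact_mod_cast this
  have := (hdel a).le
  nlinarith

include hins in
theorem SC_rep_ins (X Y : List α) (a : α) {c d : ℕ} (hcd : c ≤ d) (hd : d ≤ c + 1) :
    SC wdel wins wsub (X ++ (List.replicate c a ++ Y)) (X ++ (List.replicate d a ++ Y))
      (wins a) := by
  have hb := SC_blockins wdel wins wsub hins a Y (d - c) (X ++ List.replicate c a)
  have e1 : (X ++ List.replicate c a) ++ (List.replicate (d - c) a ++ Y)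
      = X ++ (List.replicate d a ++ Y) := by
    rw [List.append_assoc, ← List.append_assoc (List.replicate c a), ← List.replicate_add,
      Nat.add_sub_cancel' hcd]
  have e2 : (X ++ List.replicate c a) ++ Y = X ++ (List.replicate c a ++ Y) := by
    rw [List.append_assoc]
  rw [e1, e2] at hb
  refine SC_mono wdel wins wsub hb ?_
  have : ((d - c : ℕ) : ℝ) ≤ 1 := by
    have : d - c ≤ 1 := by omega
    exact_mod_cast this
  have := (hins a).le
  nlinarith

include hdel hins in
theorem bnd [DecidableEq α] (p q : List (α × ℝ)) (hp : ∀ x ∈ p, 0 ≤ x.2)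
    (hq : ∀ x ∈ q, 0 ≤ x.2) :
    ∃ K, 0 ≤ K ∧ ∀ n : ℕ,
      SC wdel wins wsub (fl n (rcat p q)) (fl n p ++ fl n q) K ∧
      SC wdel wins wsub (fl n p ++ fl n q) (fl n (rcat p q)) K := by
  rcases List.eq_nil_or_concat p with rfl | ⟨dL, ⟨a, s⟩, rfl⟩
  · refine ⟨0, le_rfl, fun n => ⟨?_, ?_⟩⟩
    · exact SC_of_eq wdel wins wsub (by rw [rcat_nil_left]; simp) le_rfl
    · exact SC_of_eq wdel wins wsub (by rw [rcat_nil_left]; simp) le_rfl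
  · simp only [List.concat_eq_append] at hp ⊢
    match q with
    | [] =>
      refine ⟨0, le_rfl, fun n => ⟨?_, ?_⟩⟩
      · exact SC_of_eq wdel wins wsub (by rw [rcat_nil_right]; simp) le_rfl
      · exact SC_of_eq wdel wins wsub (by rw [rcat_nil_right]; simp) le_rfl
    | (b, t) :: q' =>
      have hlast : (dL ++ [(a, s)]).getLast? = some (a, s) := List.getLast?_concat
      by_cases hab : a = b
      · subst hab
        have hrc : rcat (dL ++ [(a, s)]) ((a, t) :: q') = dL ++ ((a, s + t) :: q') := by
          simp only [rcat, eCat, hlast]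
          rw [if_true, List.dropLast_concat]
        have hs0 : 0 ≤ s := hp (a, s) (by simp)
        have ht0 : 0 ≤ t := hq (a, t) (by simp)
        refine ⟨wdel a + wins a, by linarith [hdel a, hins a], fun n => ?_⟩
        have hns : 0 ≤ (n : ℝ) * s := mul_nonneg (Nat.cast_nonneg n) hs0
        have hnt : 0 ≤ (n : ℝ) * t := mul_nonneg (Nat.cast_nonneg n) ht0
        have hfloor := floor_add_between hns hnt
        have hmul : ⌊(n : ℝ) * (s + t)⌋₊ = ⌊(n : ℝ) * s + (n : ℝ) * t⌋₊ := by rw [mul_add]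
        have hc2le : ⌊(n : ℝ) * s⌋₊ + ⌊(n : ℝ) * t⌋₊ ≤ ⌊(n : ℝ) * (s + t)⌋₊ := by
          rw [hmul]; exact hfloor.1
        have hc1le : ⌊(n : ℝ) * (s + t)⌋₊ ≤ ⌊(n : ℝ) * s⌋₊ + ⌊(n : ℝ) * t⌋₊ + 1 := by
          rw [hmul]; exact hfloor.2
        have e1 : fl n (rcat (dL ++ [(a, s)]) ((a, t) :: q'))
            = fl n dL ++ (List.replicate ⌊(n : ℝ) * (s + t)⌋₊ a ++ fl n q') := by
          rw [hrc, fl_append, fl_cons]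
        have e2 : fl n (dL ++ [(a, s)]) ++ fl n ((a, t) :: q')
            = fl n dL ++ (List.replicate (⌊(n : ℝ) * s⌋₊ + ⌊(n : ℝ) * t⌋₊) a ++ fl n q') := by
          rw [fl_append, fl_single, fl_cons, List.replicate_add]
          simp only [List.append_assoc]
        rw [e1, e2]
        constructor
        · exact SC_mono wdel wins wsub
            (SC_rep_del wdel wins wsub hdel _ _ a hc2le hc1le) (by linarith [hins a])
        · exact SC_mono wdel wins wsub
            (SC_rep_ins wdel wins wsub hins _ _ a hc2le hc1le) (by linarith [hdel a])
      · have hrc : rcat (dL ++ [(a, s)]) ((b, t) :: q')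
            = (dL ++ [(a, s)]) ++ ((b, t) :: q') := by
          simp only [rcat, eCat, hlast]
          rw [if_neg hab]
        refine ⟨0, le_rfl, fun n => ⟨?_, ?_⟩⟩
        · exact SC_of_eq wdel wins wsub (by rw [hrc]; simp [fl_append, fl_cons, fl_single]) le_rfl
        · exact SC_of_eq wdel wins wsub (by rw [hrc]; simp [fl_append, fl_cons, fl_single]) le_rfl

theorem rcat_nonneg [DecidableEq α] (p q : List (α × ℝ)) (hp : ∀ x ∈ p, 0 ≤ x.2)
    (hq : ∀ x ∈ q, 0 ≤ x.2) : ∀ x ∈ rcat p q, 0 ≤ x.2 := by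
  rcases List.eq_nil_or_concat p with rfl | ⟨dL, ⟨a, s⟩, rfl⟩
  · rw [rcat_nil_left]; exact hq
  · simp only [List.concat_eq_append] at hp ⊢
    match q with
    | [] => rw [rcat_nil_right]; exact hp
    | (b, t) :: q' =>
      have hlast : (dL ++ [(a, s)]).getLast? = some (a, s) := List.getLast?_concat
      by_cases hab : a = b
      · subst hab
        have hrc : rcat (dL ++ [(a, s)]) ((a, t) :: q') = dL ++ ((a, s + t) :: q') := by
          simp only [rcat, eCat, hlast]
          rw [if_true, List.dropLast_concat]
        rw [hrc]
        intro x hx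
        rcases List.mem_append.mp hx with h | h
        · exact hp x (by simp [h])
        · rcases List.mem_cons.mp h with rfl | h
          · have hs0 : 0 ≤ s := hp (a, s) (by simp)
            have ht0 : 0 ≤ t := hq (a, t) (by simp)
            simpa using by linarith
          · exact hq x (by simp [h])
      · have hrc : rcat (dL ++ [(a, s)]) ((b, t) :: q')
            = (dL ++ [(a, s)]) ++ ((b, t) :: q') := by
          simp only [rcat, eCat, hlast]
          rw [if_neg hab]
        rw [hrc]
        intro x hx
        rcases List.mem_append.mp hx with h | h
        · exact hp x h
        · exact hq x h

include hdel hins hsub0 hsubpos in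
theorem step_bound [DecidableEq α] {u v : List (α × ℝ)} {c : ℝ}
    (h : Step wdel wins wsub u v c) :
    ∃ K, 0 ≤ K ∧ ∀ n : ℕ,
      SC wdel wins wsub (fl n u) (fl n v) ((n : ℝ) * c + K) := by
  obtain ⟨P₁, P₂, hP₁, hP₂, hcase⟩ := h
  have hp1 : ∀ x ∈ P₁, 0 ≤ x.2 := fun x hx => (hP₁.2 x hx).le
  have hp2 : ∀ x ∈ P₂, 0 ≤ x.2 := fun x hx => (hP₂.2 x hx).le
  rcases hcase with ⟨a, q, hq, hu, hv, hc⟩ | ⟨a, q, hq, hu, hv, hc⟩ |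
    ⟨a, b, q, hq, hu, hv, hc⟩
  · -- insertion
    have hsing : ∀ x ∈ [(a, q)], 0 ≤ x.2 := by simp [hq.le]
    have hR : ∀ x ∈ rcat [(a, q)] P₂, 0 ≤ x.2 := rcat_nonneg [(a, q)] P₂ hsing hp2
    obtain ⟨K₁, hK₁, hB₁⟩ := bnd wdel wins wsub hdel hins P₁ P₂ hp1 hp2
    obtain ⟨K₂, hK₂, hB₂⟩ := bnd wdel wins wsub hdel hins P₁ (rcat [(a, q)] P₂) hp1 hR
    obtain ⟨K₃, hK₃, hB₃⟩ := bnd wdel wins wsub hdel hins [(a, q)] P₂ hsing hp2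
    refine ⟨K₁ + K₂ + K₃, by linarith, fun n => ?_⟩
    have s1 : SC wdel wins wsub (fl n u) (fl n P₁ ++ fl n P₂) K₁ := hu ▸ (hB₁ n).1
    have s2 : SC wdel wins wsub (fl n P₁ ++ fl n P₂)
        (fl n P₁ ++ (List.replicate ⌊(n : ℝ) * q⌋₊ a ++ fl n P₂))
        ((⌊(n : ℝ) * q⌋₊ : ℝ) * wins a) :=
      SC_blockins wdel wins wsub hins a (fl n P₂) _ (fl n P₁)
    have s3 : SC wdel wins wsub (fl n P₁ ++ (List.replicate ⌊(n : ℝ) * q⌋₊ a ++ fl n P₂))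
        (fl n P₁ ++ fl n (rcat [(a, q)] P₂)) K₃ := by
      have := SC_append_left wdel wins wsub (fl n P₁) (hB₃ n).2
      rwa [fl_single] at this
    have s4 : SC wdel wins wsub (fl n P₁ ++ fl n (rcat [(a, q)] P₂)) (fl n v) K₂ :=
      hv ▸ (hB₂ n).2
    have hchain := SC_trans wdel wins wsub
      (SC_trans wdel wins wsub (SC_trans wdel wins wsub s1 s2) s3) s4
    refine SC_mono wdel wins wsub hchain ?_
    have hfle : (⌊(n : ℝ) * q⌋₊ : ℝ) ≤ (n : ℝ) * q := Nat.floor_le (mul_nonneg (Nat.cast_nonneg n) hq.le)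
    have hwa := (hins a).le
    have : (⌊(n : ℝ) * q⌋₊ : ℝ) * wins a ≤ (n : ℝ) * q * wins a :=
      mul_le_mul_of_nonneg_right hfle hwa
    rw [hc]; nlinarith [this]
  · -- deletion
    have hsing : ∀ x ∈ [(a, q)], 0 ≤ x.2 := by simp [hq.le]
    have hR : ∀ x ∈ rcat [(a, q)] P₂, 0 ≤ x.2 := rcat_nonneg [(a, q)] P₂ hsing hp2
    obtain ⟨K₁, hK₁, hB₁⟩ := bnd wdel wins wsub hdel hins P₁ P₂ hp1 hp2
    obtain ⟨K₂, hK₂, hB₂⟩ := bnd wdel wins wsub hdel hins P₁ (rcat [(a, q)] P₂) hp1 hR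
    obtain ⟨K₃, hK₃, hB₃⟩ := bnd wdel wins wsub hdel hins [(a, q)] P₂ hsing hp2
    refine ⟨K₁ + K₂ + K₃, by linarith, fun n => ?_⟩
    have s1 : SC wdel wins wsub (fl n u) (fl n P₁ ++ fl n (rcat [(a, q)] P₂)) K₂ :=
      hu ▸ (hB₂ n).1
    have s2 : SC wdel wins wsub (fl n P₁ ++ fl n (rcat [(a, q)] P₂))
        (fl n P₁ ++ (List.replicate ⌊(n : ℝ) * q⌋₊ a ++ fl n P₂)) K₃ := by
      have := SC_append_left wdel wins wsub (fl n P₁) (hB₃ n).1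
      rwa [fl_single] at this
    have s3 : SC wdel wins wsub (fl n P₁ ++ (List.replicate ⌊(n : ℝ) * q⌋₊ a ++ fl n P₂))
        (fl n P₁ ++ fl n P₂) ((⌊(n : ℝ) * q⌋₊ : ℝ) * wdel a) :=
      SC_blockdel wdel wins wsub hdel a (fl n P₂) _ (fl n P₁)
    have s4 : SC wdel wins wsub (fl n P₁ ++ fl n P₂) (fl n v) K₁ := hv ▸ (hB₁ n).2
    have hchain := SC_trans wdel wins wsub
      (SC_trans wdel wins wsub (SC_trans wdel wins wsub s1 s2) s3) s4
    refine SC_mono wdel wins wsub hchain ?_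
    have hfle : (⌊(n : ℝ) * q⌋₊ : ℝ) ≤ (n : ℝ) * q := Nat.floor_le (mul_nonneg (Nat.cast_nonneg n) hq.le)
    have hwa := (hdel a).le
    have : (⌊(n : ℝ) * q⌋₊ : ℝ) * wdel a ≤ (n : ℝ) * q * wdel a :=
      mul_le_mul_of_nonneg_right hfle hwa
    rw [hc]; nlinarith [this]
  · -- substitution
    have hsa : ∀ x ∈ [(a, q)], 0 ≤ x.2 := by simp [hq.le]
    have hsb : ∀ x ∈ [(b, q)], 0 ≤ x.2 := by simp [hq.le]
    have hRa : ∀ x ∈ rcat [(a, q)] P₂, 0 ≤ x.2 := rcat_nonneg [(a, q)] P₂ hsa hp2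
    have hRb : ∀ x ∈ rcat [(b, q)] P₂, 0 ≤ x.2 := rcat_nonneg [(b, q)] P₂ hsb hp2
    obtain ⟨K₂, hK₂, hB₂⟩ := bnd wdel wins wsub hdel hins P₁ (rcat [(a, q)] P₂) hp1 hRa
    obtain ⟨K₃, hK₃, hB₃⟩ := bnd wdel wins wsub hdel hins [(a, q)] P₂ hsa hp2
    obtain ⟨K₄, hK₄, hB₄⟩ := bnd wdel wins wsub hdel hins [(b, q)] P₂ hsb hp2
    obtain ⟨K₅, hK₅, hB₅⟩ := bnd wdel wins wsub hdel hins P₁ (rcat [(b, q)] P₂) hp1 hRb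
    refine ⟨K₂ + K₃ + K₄ + K₅, by linarith, fun n => ?_⟩
    have s1 : SC wdel wins wsub (fl n u) (fl n P₁ ++ fl n (rcat [(a, q)] P₂)) K₂ :=
      hu ▸ (hB₂ n).1
    have s2 : SC wdel wins wsub (fl n P₁ ++ fl n (rcat [(a, q)] P₂))
        (fl n P₁ ++ (List.replicate ⌊(n : ℝ) * q⌋₊ a ++ fl n P₂)) K₃ := by
      have := SC_append_left wdel wins wsub (fl n P₁) (hB₃ n).1
      rwa [fl_single] at this
    have s3 : SC wdel wins wsub (fl n P₁ ++ (List.replicate ⌊(n : ℝ) * q⌋₊ a ++ fl n P₂))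
        (fl n P₁ ++ (List.replicate ⌊(n : ℝ) * q⌋₊ b ++ fl n P₂))
        ((⌊(n : ℝ) * q⌋₊ : ℝ) * wsub a b) :=
      SC_blocksub wdel wins wsub a b (fl n P₂) _ (fl n P₁)
    have s4 : SC wdel wins wsub (fl n P₁ ++ (List.replicate ⌊(n : ℝ) * q⌋₊ b ++ fl n P₂))
        (fl n P₁ ++ fl n (rcat [(b, q)] P₂)) K₄ := by
      have := SC_append_left wdel wins wsub (fl n P₁) (hB₄ n).2
      rwa [fl_single] at this
    have s5 : SC wdel wins wsub (fl n P₁ ++ fl n (rcat [(b, q)] P₂)) (fl n v) K₅ :=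
      hv ▸ (hB₅ n).2
    have hchain := SC_trans wdel wins wsub (SC_trans wdel wins wsub
      (SC_trans wdel wins wsub (SC_trans wdel wins wsub s1 s2) s3) s4) s5
    refine SC_mono wdel wins wsub hchain ?_
    have hfle : (⌊(n : ℝ) * q⌋₊ : ℝ) ≤ (n : ℝ) * q := Nat.floor_le (mul_nonneg (Nat.cast_nonneg n) hq.le)
    have hwab : 0 ≤ wsub a b := wsub_nonneg wsub hsub0 hsubpos a b
    have : (⌊(n : ℝ) * q⌋₊ : ℝ) * wsub a b ≤ (n : ℝ) * q * wsub a b :=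
      mul_le_mul_of_nonneg_right hfle hwab
    rw [hc]; nlinarith [this]

include hdel hins hsub0 hsubpos in
theorem seq_bound [DecidableEq α] {p₁ p₂ : List (α × ℝ)} {c : ℝ}
    (h : EditCost wdel wins wsub p₁ p₂ c) :
    ∃ K, 0 ≤ K ∧ ∀ n : ℕ,
      SC wdel wins wsub (fl n p₁) (fl n p₂) ((n : ℝ) * c + K) := by
  induction h with
  | refl => exact ⟨0, le_rfl, fun n => SC_of_eq wdel wins wsub rfl (by simp)⟩
  | @step p q cc cc' hpq hs ih =>
    obtain ⟨K₁, hK₁, hS₁⟩ := ih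
    obtain ⟨K₂, hK₂, hS₂⟩ := step_bound wdel wins wsub hdel hins hsub0 hsubpos hs
    refine ⟨K₁ + K₂, by linarith, fun n => ?_⟩
    have := SC_trans wdel wins wsub (hS₁ n) (hS₂ n)
    exact SC_mono wdel wins wsub this (le_of_eq (by ring))

end EAux

namespace EAux
open ExpStr
variable {α : Type*}
variable (wdel wins : α → ℝ) (wsub : α → α → ℝ)

def wexp [DecidableEq α] (ε : ℝ) : List α → List (α × ℝ)
  | [] => []
  | a :: w => rcat [(a, ε)] (wexp ε w)

@[simp] theorem wexp_nil [DecidableEq α] (ε : ℝ) : wexp ε ([] : List α) = [] := rfl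

theorem wexp_cons [DecidableEq α] (ε : ℝ) (a : α) (w : List α) :
    wexp ε (a :: w) = rcat [(a, ε)] (wexp ε w) := rfl

theorem wexp_RES [DecidableEq α] {ε : ℝ} (hε : 0 < ε) (w : List α) : RES (wexp ε w) := by
  induction w with
  | nil => exact ⟨List.isChain_nil, by simp⟩
  | cons a w ih =>
    rw [wexp_cons]
    match hw : wexp ε w with
    | [] =>
      rw [rcat_nil_right]
      exact ⟨List.isChain_singleton _, by simpa using hε⟩
    | (c, t) :: rest =>
      rw [hw] at ih
      rw [rcat_single_cons]
      by_cases hac : a = c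
      · subst hac
        rw [if_pos rfl]
        constructor
        · have h' := List.isChain_cons.mp ih.1
          exact List.isChain_cons.mpr ⟨h'.1, h'.2⟩
        · intro x hx
          rcases List.mem_cons.mp hx with rfl | hx
          · have ht : 0 < t := ih.2 (a, t) (by simp)
            simpa using by linarith
          · exact ih.2 x (by simp [hx])
      · rw [if_neg hac]
        constructor
        · exact List.isChain_cons_cons.mpr ⟨by simpa using hac, ih.1⟩
        · intro x hx
          rcases List.mem_cons.mp hx with rfl | hx
          · simpa using hε
          · exact ih.2 x hx
    termination_by w.length
    decreasing_by simp_all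

theorem wexp_ratexp [DecidableEq α] (r : ℚ) (w : List α) : RatExp (wexp ((r : ℝ)) w) := by
  induction w with
  | nil => simp [RatExp]
  | cons a w ih =>
    rw [wexp_cons]
    match hw : wexp ((r : ℝ)) w with
    | [] =>
      rw [rcat_nil_right]
      intro x hx
      rcases List.mem_singleton.mp hx with rfl
      exact ⟨r, rfl⟩
    | (c, t) :: rest =>
      rw [hw] at ih
      rw [rcat_single_cons]
      obtain ⟨rt, hrt⟩ := ih (c, t) (by simp)
      by_cases hac : a = c
      · rw [if_pos hac]
        intro x hx
        rcases List.mem_cons.mp hx with rfl | hx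
        · refine ⟨r + rt, ?_⟩
          show (r : ℝ) + t = ((r + rt : ℚ) : ℝ)
          push_cast
          rw [show t = (rt : ℝ) from hrt]
        · exact ih x (by simp [hx])
      · rw [if_neg hac]
        intro x hx
        rcases List.mem_cons.mp hx with rfl | hx
        · exact ⟨r, rfl⟩
        · exact ih x hx
    termination_by w.length
    decreasing_by simp_all

theorem wexp_append [DecidableEq α] (ε : ℝ) (w₁ w₂ : List α) :
    wexp ε (w₁ ++ w₂) = rcat (wexp ε w₁) (wexp ε w₂) := by
  induction w₁ with
  | nil => simp [rcat_nil_left]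
  | cons a w ih =>
    rw [List.cons_append, wexp_cons, ih, rcat_single_assoc]
    rfl

theorem Step_of_SStep [DecidableEq α] {ε : ℝ} (hε : 0 < ε) {w w' : List α} {c : ℝ}
    (h : SStep wdel wins wsub w w' c) :
    Step wdel wins wsub (wexp ε w) (wexp ε w') (ε * c) := by
  obtain ⟨x, y, hcase⟩ := h
  refine ⟨wexp ε x, wexp ε y, wexp_RES hε x, wexp_RES hε y, ?_⟩
  rcases hcase with ⟨b, hp, hq, hc⟩ | ⟨b, hp, hq, hc⟩ | ⟨b, b', hp, hq, hc⟩
  · refine Or.inl ⟨b, ε, hε, ?_, ?_, by rw [hc]⟩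
    · rw [hp, wexp_append]
    · rw [hq, wexp_append, wexp_cons]
  · refine Or.inr (Or.inl ⟨b, ε, hε, ?_, ?_, by rw [hc]⟩)
    · rw [hp, wexp_append, wexp_cons]
    · rw [hq, wexp_append]
  · refine Or.inr (Or.inr ⟨b, b', ε, hε, ?_, ?_, by rw [hc]⟩)
    · rw [hp, wexp_append, wexp_cons]
    · rw [hq, wexp_append, wexp_cons]

end EAux

namespace EAux
open ExpStr
variable {α : Type*}
variable (wdel wins : α → ℝ) (wsub : α → α → ℝ)

theorem lev_realize : ∀ u v : List α, SEditCost wdel wins wsub u v (lev wdel wins wsub u v) := by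
  intro u
  induction u with
  | nil =>
    intro v
    induction v with
    | nil => rw [lev_nil_nil]; exact .refl
    | cons b v ihv =>
      rw [lev_nil_cons, add_comm]
      exact ihv.step ⟨[], v, Or.inl ⟨b, rfl, rfl, rfl⟩⟩
  | cons a u ihu =>
    intro v
    induction v with
    | nil =>
      rw [lev_cons_nil]
      have s1 : SEditCost wdel wins wsub (a :: u) u (0 + wdel a) :=
        SEditCost.refl.step ⟨[], u, Or.inr (Or.inl ⟨a, rfl, rfl, rfl⟩)⟩
      have := SEditCost_trans wdel wins wsub s1 (ihu [])
      have e : (0 + wdel a) + lev wdel wins wsub u [] = wdel a + lev wdel wins wsub u [] := by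
        ring
      rwa [e] at this
    | cons b v ihv =>
      rw [lev_cons_cons]
      rcases min_cases (wdel a + lev wdel wins wsub u (b :: v))
        (min (wins b + lev wdel wins wsub (a :: u) v)
          (wsub a b + lev wdel wins wsub u v)) with ⟨h1, _⟩ | ⟨h1, _⟩
      · rw [h1]
        have s1 : SEditCost wdel wins wsub (a :: u) u (0 + wdel a) :=
          SEditCost.refl.step ⟨[], u, Or.inr (Or.inl ⟨a, rfl, rfl, rfl⟩)⟩
        have := SEditCost_trans wdel wins wsub s1 (ihu (b :: v))
        have e : (0 + wdel a) + lev wdel wins wsub u (b :: v)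
            = wdel a + lev wdel wins wsub u (b :: v) := by ring
        rwa [e] at this
      · rw [h1]
        rcases min_cases (wins b + lev wdel wins wsub (a :: u) v)
          (wsub a b + lev wdel wins wsub u v) with ⟨h2, _⟩ | ⟨h2, _⟩
        · rw [h2, add_comm]
          exact ihv.step ⟨[], v, Or.inl ⟨b, rfl, rfl, rfl⟩⟩
        · rw [h2]
          have s1 : SEditCost wdel wins wsub (a :: u) (b :: u) (0 + wsub a b) :=
            SEditCost.refl.step ⟨[], u, Or.inr (Or.inr ⟨a, b, rfl, rfl, rfl⟩)⟩
          have s2 : SEditCost wdel wins wsub (b :: u) (b :: v) (lev wdel wins wsub u v) :=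
            SEditCost_append_left wdel wins wsub [b] (ihu v)
          have := SEditCost_trans wdel wins wsub s1 s2
          have e : (0 + wsub a b) + lev wdel wins wsub u v
              = wsub a b + lev wdel wins wsub u v := by ring
          rwa [e] at this

theorem ECIn_of_SEdit [DecidableEq α] (r : ℚ) (hε : 0 < ((r : ℚ) : ℝ)) {w w' : List α} {c : ℝ}
    (h : SEditCost wdel wins wsub w w' c) :
    EditCostIn RatExp wdel wins wsub (wexp ((r : ℚ) : ℝ) w) (wexp ((r : ℚ) : ℝ) w')
      (((r : ℚ) : ℝ) * c) := by
  induction h with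
  | refl => rw [mul_zero]; exact .refl
  | @step p q cc cc' hpq hs ih =>
    have hst := Step_of_SStep wdel wins wsub hε hs
    have hnew := EditCostIn.step ih hst (wexp_ratexp r q)
    rwa [← mul_add] at hnew

theorem EC_of_ECIn [DecidableEq α] {P : List (α × ℝ) → Prop} {u v : List (α × ℝ)} {c : ℝ}
    (h : EditCostIn P wdel wins wsub u v c) : EditCost wdel wins wsub u v c := by
  induction h with
  | refl => exact .refl
  | step hpq hs _ ih => exact ih.step hs

theorem common_den (l : List (α × ℝ)) (hrat : ∀ x ∈ l, ∃ r : ℚ, x.2 = (r : ℝ))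
    (hpos : ∀ x ∈ l, 0 < x.2) :
    ∃ N : ℕ, 0 < N ∧ ∀ x ∈ l, ∃ k : ℕ, 0 < k ∧ x.2 = (k : ℝ) / (N : ℝ) := by
  induction l with
  | nil => exact ⟨1, one_pos, by simp⟩
  | cons x l ih =>
    obtain ⟨N, hN, hl⟩ := ih (fun y hy => hrat y (by simp [hy])) (fun y hy => hpos y (by simp [hy]))
    obtain ⟨r, hr⟩ := hrat x (by simp)
    have hxpos : 0 < x.2 := hpos x (by simp)
    have hrpos : 0 < r := by
      rw [hr] at hxpos
      exact_mod_cast hxpos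
    have hdenpos : 0 < r.den := r.pos
    refine ⟨N * r.den, Nat.mul_pos hN hdenpos, ?_⟩
    intro y hy
    have hNne : ((N : ℕ) : ℝ) ≠ 0 := Nat.cast_ne_zero.mpr hN.ne'
    have hdne : ((r.den : ℕ) : ℝ) ≠ 0 := Nat.cast_ne_zero.mpr hdenpos.ne'
    rcases List.mem_cons.mp hy with rfl | hy
    · refine ⟨r.num.toNat * N, ?_, ?_⟩
      · have hnum : 0 < r.num := Rat.num_pos.mpr hrpos
        have : 0 < r.num.toNat := by omega
        exact Nat.mul_pos this hN
      · have hnum : 0 < r.num := Rat.num_pos.mpr hrpos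
        have hcast : ((r.num.toNat : ℕ) : ℝ) = (r.num : ℝ) := by
          exact_mod_cast congrArg Int.cast (Int.toNat_of_nonneg hnum.le)
        rw [hr, Rat.cast_def]
        push_cast
        rw [hcast]
        field_simp
    · obtain ⟨k, hk, hkeq⟩ := hl y hy
      refine ⟨k * r.den, Nat.mul_pos hk hdenpos, ?_⟩
      rw [hkeq]
      push_cast
      field_simp

theorem wexp_rep [DecidableEq α] (ε : ℝ) (a : α) (w : List α) : ∀ k : ℕ,
    wexp ε (List.replicate (k + 1) a ++ w)
      = rcat [(a, ((k + 1 : ℕ) : ℝ) * ε)] (wexp ε w) := by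
  intro k
  induction k with
  | zero => simp [List.replicate_succ, wexp_cons]
  | succ k ih =>
    have hrep : List.replicate (k + 2) a ++ w = a :: (List.replicate (k + 1) a ++ w) := by
      simp [List.replicate_succ]
    rw [hrep, wexp_cons, ih, rcat_single_assoc, rcat_single_cons, if_pos rfl]
    have harith : ε + ((k + 1 : ℕ) : ℝ) * ε = ((k + 2 : ℕ) : ℝ) * ε := by push_cast; ring
    rw [harith]

theorem wexp_fl [DecidableEq α] {N : ℕ} (hN : 0 < N) : ∀ (p : List (α × ℝ)), IsExp p →
    (∀ x ∈ p, ∃ k : ℕ, 0 < k ∧ x.2 = (k : ℝ) / (N : ℝ)) →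
    wexp (1 / (N : ℝ)) (fl N p) = p := by
  intro p
  induction p with
  | nil => intro _ _; rfl
  | cons x p ih =>
    intro hexp hden
    obtain ⟨a, s⟩ := x
    obtain ⟨k, hk, hks⟩ := hden (a, s) (by simp)
    have hNne : ((N : ℕ) : ℝ) ≠ 0 := Nat.cast_ne_zero.mpr hN.ne'
    have hfloor : ⌊(N : ℝ) * s⌋₊ = k := by
      have : (N : ℝ) * s = (k : ℝ) := by
        rw [show s = (k : ℝ) / (N : ℝ) from hks]
        field_simp
      rw [this, Nat.floor_natCast]
    have htail : IsExp p := (List.isChain_cons.mp hexp).2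
    have ihp := ih htail (fun y hy => hden y (by simp [hy]))
    rw [fl_cons, hfloor]
    obtain ⟨k', rfl⟩ : ∃ k', k = k' + 1 := ⟨k - 1, by omega⟩
    rw [wexp_rep, ihp]
    have harith : ((k' + 1 : ℕ) : ℝ) * (1 / (N : ℝ)) = ((k' + 1 : ℕ) : ℝ) / (N : ℝ) := by
      ring
    rw [harith, ← hks]
    match p with
    | [] => exact rcat_nil_right _
    | (b, t) :: p' =>
      have hab : a ≠ b := by
        have := (List.isChain_cons_cons.mp hexp).1
        simpa using this
      rw [rcat_single_cons, if_neg hab]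

theorem blow_append (m : ℕ) (x y : List α) : blow m (x ++ y) = blow m x ++ blow m y :=
  List.flatMap_append

theorem blow_rep (m : ℕ) (a : α) : ∀ k : ℕ,
    blow m (List.replicate k a) = List.replicate (k * m) a := by
  intro k
  induction k with
  | zero => simp [blow]
  | succ k ih =>
    rw [List.replicate_succ, show (k + 1) * m = m + k * m by ring, List.replicate_add]
    rw [← ih]
    rfl

theorem fl_mul {N : ℕ} (hN : 0 < N) (m : ℕ) : ∀ p : List (α × ℝ),
    (∀ x ∈ p, ∃ k : ℕ, x.2 = (k : ℝ) / (N : ℝ)) →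
    fl (m * N) p = blow m (fl N p) := by
  intro p
  induction p with
  | nil => intro _; rfl
  | cons x p ih =>
    intro hden
    obtain ⟨a, s⟩ := x
    obtain ⟨k, hks⟩ := hden (a, s) (by simp)
    have hNne : ((N : ℕ) : ℝ) ≠ 0 := Nat.cast_ne_zero.mpr hN.ne'
    have hf1 : ⌊((m * N : ℕ) : ℝ) * s⌋₊ = m * k := by
      have : ((m * N : ℕ) : ℝ) * s = ((m * k : ℕ) : ℝ) := by
        rw [show s = (k : ℝ) / (N : ℝ) from hks]
        push_cast
        field_simp
      rw [this, Nat.floor_natCast]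
    have hf2 : ⌊(N : ℝ) * s⌋₊ = k := by
      have : (N : ℝ) * s = (k : ℝ) := by
        rw [show s = (k : ℝ) / (N : ℝ) from hks]
        field_simp
      rw [this, Nat.floor_natCast]
    rw [fl_cons, fl_cons, hf1, hf2, blow_append, blow_rep,
      ih (fun y hy => hden y (by simp [hy])), Nat.mul_comm k m]

end EAux

open EAux

open ExpStr in
/-- For `ℚ⁺`-exponent-strings `p₁, p₂` there is a minimum-cost exp-edit
sequence from `p₁` to `p₂` consisting only of `ℚ⁺`-exponent-strings, of
total cost `dist(p₁, p₂)`; in particular the infimum restricted to rational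
intermediate terms equals the unrestricted exp-edit distance. -/
theorem min_seq_rat {α : Type*} [DecidableEq α]
    (wdel wins : α → ℝ) (wsub : α → α → ℝ)
    (hdel : ∀ a, 0 < wdel a) (hins : ∀ a, 0 < wins a)
    (hsub0 : ∀ a, wsub a a = 0) (hsubpos : ∀ a b, a ≠ b → 0 < wsub a b)
    (htri₁ : ∀ a b c, wsub a c ≤ wsub a b + wsub b c)
    (htri₂ : ∀ a b, wsub a b ≤ wdel a + wins b)
    (htri₃ : ∀ a b, wins b ≤ wins a + wsub a b)
    (htri₄ : ∀ a b, wdel a ≤ wsub a b + wdel b)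
    (p₁ p₂ : List (α × ℝ)) (h₁ : RES p₁) (h₂ : RES p₂)
    (hq₁ : RatExp p₁) (hq₂ : RatExp p₂) :
    EditCostIn RatExp wdel wins wsub p₁ p₂ (eDist wdel wins wsub p₁ p₂) ∧
    sInf {c | EditCostIn RatExp wdel wins wsub p₁ p₂ c} =
      eDist wdel wins wsub p₁ p₂ := by
  have hratall : ∀ x ∈ p₁ ++ p₂, ∃ r : ℚ, x.2 = (r : ℝ) := by
    intro x hx
    rcases List.mem_append.mp hx with h | h
    exacts [hq₁ x h, hq₂ x h]
  have hposall : ∀ x ∈ p₁ ++ p₂, 0 < x.2 := by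
    intro x hx
    rcases List.mem_append.mp hx with h | h
    exacts [h₁.2 x h, h₂.2 x h]
  obtain ⟨N, hN, hden⟩ := EAux.common_den (p₁ ++ p₂) hratall hposall
  have hden₁ : ∀ x ∈ p₁, ∃ k : ℕ, 0 < k ∧ x.2 = (k : ℝ) / (N : ℝ) :=
    fun x hx => hden x (List.mem_append.mpr (Or.inl hx))
  have hden₂ : ∀ x ∈ p₂, ∃ k : ℕ, 0 < k ∧ x.2 = (k : ℝ) / (N : ℝ) :=
    fun x hx => hden x (List.mem_append.mpr (Or.inr hx))
  have hNpos : (0 : ℝ) < (N : ℝ) := by exact_mod_cast hN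
  set w₁ := EAux.fl N p₁ with hw₁def
  set w₂ := EAux.fl N p₂ with hw₂def
  have hw₁ : EAux.wexp (1 / (N : ℝ)) w₁ = p₁ := EAux.wexp_fl hN p₁ h₁.1 hden₁
  have hw₂ : EAux.wexp (1 / (N : ℝ)) w₂ = p₂ := EAux.wexp_fl hN p₂ h₂.1 hden₂
  set L := EAux.lev wdel wins wsub w₁ w₂ with hLdef
  set D := (1 / (N : ℝ)) * L with hDdef
  have hr0 : ((1 / (N : ℚ) : ℚ) : ℝ) = 1 / (N : ℝ) := by push_cast; ring
  have hε : (0 : ℝ) < ((1 / (N : ℚ) : ℚ) : ℝ) := by rw [hr0]; positivity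
  have attain : EditCostIn RatExp wdel wins wsub p₁ p₂ D := by
    have h := EAux.ECIn_of_SEdit wdel wins wsub (1 / (N : ℚ)) hε
      (EAux.lev_realize wdel wins wsub w₁ w₂)
    rw [hr0, hw₁, hw₂] at h
    exact h
  have hlow : ∀ c, EditCost wdel wins wsub p₁ p₂ c → D ≤ c := by
    intro c hc
    obtain ⟨K, hK, hSC⟩ := EAux.seq_bound wdel wins wsub hdel hins hsub0 hsubpos hc
    have hlev0 : 0 ≤ L := EAux.lev_nonneg wdel wins wsub hdel hins hsub0 hsubpos w₁ w₂
    have hkey : ∀ mm : ℕ, (mm : ℝ) * L ≤ ((mm * N : ℕ) : ℝ) * c + K := by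
      intro mm
      have hfm₁ : EAux.fl (mm * N) p₁ = EAux.blow mm w₁ :=
        EAux.fl_mul hN mm p₁ (fun x hx => ⟨(hden₁ x hx).choose, (hden₁ x hx).choose_spec.2⟩)
      have hfm₂ : EAux.fl (mm * N) p₂ = EAux.blow mm w₂ :=
        EAux.fl_mul hN mm p₂ (fun x hx => ⟨(hden₂ x hx).choose, (hden₂ x hx).choose_spec.2⟩)
      obtain ⟨c', hc', hcle⟩ := hSC (mm * N)
      have hlev := EAux.lev_min wdel wins wsub hdel hins hsub0 hsubpos htri₁ htri₃ htri₄ hc'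
      rw [hfm₁, hfm₂] at hlev
      have hblow := EAux.blow_le wdel wins wsub mm w₁ w₂
      linarith
    by_contra hlt
    push_neg at hlt
    have hDc : 0 < D - c := by linarith
    obtain ⟨mm, hmm⟩ := exists_nat_gt (K / (D - c))
    have hmmN : (mm : ℝ) ≤ ((mm * N : ℕ) : ℝ) := by
      have : mm ≤ mm * N := by
        calc mm = mm * 1 := (Nat.mul_one mm).symm
          _ ≤ mm * N := Nat.mul_le_mul_left mm hN
      exact_mod_cast this
    have hm1 : K / (D - c) < ((mm * N : ℕ) : ℝ) := lt_of_lt_of_le hmm hmmN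
    have hmNpos : (0 : ℝ) < ((mm * N : ℕ) : ℝ) :=
      lt_of_le_of_lt (div_nonneg hK hDc.le) hm1
    have hKlt : K < (D - c) * ((mm * N : ℕ) : ℝ) := by
      rw [div_lt_iff₀ hDc] at hm1
      linarith
    have hDmul : D * ((mm * N : ℕ) : ℝ) = (mm : ℝ) * L := by
      rw [hDdef]
      push_cast
      field_simp
    linarith [hkey mm, hKlt, hDmul]
  have hD_EC : EditCost wdel wins wsub p₁ p₂ D := EAux.EC_of_ECIn wdel wins wsub attain
  have hleast : IsLeast {c | EditCost wdel wins wsub p₁ p₂ c} D :=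
    ⟨hD_EC, fun c hc => hlow c hc⟩
  have heD : eDist wdel wins wsub p₁ p₂ = D := hleast.csInf_eq
  refine ⟨?_, ?_⟩
  · rw [heD]
    exact attain
  · have hleast₂ : IsLeast {c | EditCostIn RatExp wdel wins wsub p₁ p₂ c} D :=
      ⟨attain, fun c hc => hlow c (EAux.EC_of_ECIn wdel wins wsub hc)⟩
    rw [hleast₂.csInf_eq, heD]
end Aux
end
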